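/- arXiv:1909.12818 — 3 statements merged into one kernel-verified Lean document; each statement's English description precedes it below -/
import Mathlib

section
/- Let 0 < p < ∞, 0 < q ≤ ∞, and b < -1/q (b ≤ 0 if q = ∞). Then the limiting interpolation space (L_p(Ω), L_∞(Ω))_{(1,b),q} coincides with the Lorentz–Zygmund space L_{∞,q}(log L)_b(Ω), with equivalent quasi-norms: (∫₀^1 (t^{-1/p}(1-log t)^b (∫₀^t f^*(u)^p du)^{1/p})^q dt/t)^{1/q} ≍ (∫₀^1 ((1-log t)^b f^*(t))^q dt/t)^{1/q}. -/
open MeasureTheory Set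
open scoped ENNReal NNReal

namespace LIZ

lemma two_rpow_le {r : ℝ} (hr0 : 0 < r) (hr1 : r ≤ 1) (x y : ℝ≥0∞) :
    (x + y) ^ r ≤ x ^ r + y ^ r := by
  have h := ENNReal.rpow_add_rpow_le x y hr0 hr1
  simp only [ENNReal.rpow_one, one_div_one] at h
  calc (x + y) ^ r ≤ ((x ^ r + y ^ r) ^ (1/r)) ^ r :=
        ENNReal.rpow_le_rpow h hr0.le
    _ = x ^ r + y ^ r := by
        rw [← ENNReal.rpow_mul, one_div, inv_mul_cancel₀ hr0.ne', ENNReal.rpow_one]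

lemma tsum_rpow_le {r : ℝ} (hr0 : 0 < r) (hr1 : r ≤ 1) (a : ℕ → ℝ≥0∞) :
    (∑' k, a k) ^ r ≤ ∑' k, a k ^ r := by
  have key : ∀ s : Finset ℕ, (∑ k ∈ s, a k) ^ r ≤ ∑ k ∈ s, a k ^ r := by
    intro s
    induction s using Finset.induction with
    | empty => simp [ENNReal.zero_rpow_of_pos hr0]
    | @insert i s hi ih =>
      rw [Finset.sum_insert hi, Finset.sum_insert hi]
      exact (two_rpow_le hr0 hr1 _ _).trans (add_le_add le_rfl ih)
  have h1 : (∑' k, a k) ≤ (∑' k, a k ^ r) ^ (1/r) := by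
    rw [ENNReal.tsum_eq_iSup_sum]
    refine iSup_le (fun s => ?_)
    have h2 : (∑ k ∈ s, a k) ^ r ≤ ∑' k, a k ^ r :=
      (key s).trans (ENNReal.sum_le_tsum s)
    calc ∑ k ∈ s, a k = ((∑ k ∈ s, a k) ^ r) ^ (1/r) := by
          rw [← ENNReal.rpow_mul, mul_one_div, div_self hr0.ne', ENNReal.rpow_one]
      _ ≤ (∑' k, a k ^ r) ^ (1/r) := ENNReal.rpow_le_rpow h2 (by positivity)
  calc (∑' k, a k) ^ r ≤ ((∑' k, a k ^ r) ^ (1/r)) ^ r := ENNReal.rpow_le_rpow h1 hr0.le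
    _ = ∑' k, a k ^ r := by
        rw [← ENNReal.rpow_mul, one_div, inv_mul_cancel₀ hr0.ne', ENNReal.rpow_one]

/-- geometric weights -/
noncomputable def w (k : ℕ) : ℝ≥0∞ := ENNReal.ofReal ((2:ℝ)⁻¹ ^ (k+1))

lemma w_pos (k : ℕ) : 0 < w k := by
  unfold w; rw [ENNReal.ofReal_pos]; positivity

lemma w_le_one (k : ℕ) : w k ≤ 1 := by
  unfold w
  rw [show (1:ℝ≥0∞) = ENNReal.ofReal 1 by simp]
  refine ENNReal.ofReal_le_ofReal (pow_le_one₀ (by norm_num) (by norm_num))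

lemma w_rpow (k : ℕ) {s : ℝ} (hs : 0 < s) :
    w k ^ s = ENNReal.ofReal (((2:ℝ)⁻¹ ^ s) ^ (k+1)) := by
  unfold w
  rw [ENNReal.ofReal_rpow_of_pos (by positivity)]
  congr 1
  rw [← Real.rpow_natCast ((2:ℝ)⁻¹) (k+1), ← Real.rpow_natCast ((2:ℝ)⁻¹ ^ s) (k+1),
    ← Real.rpow_mul (by norm_num), ← Real.rpow_mul (by norm_num), mul_comm]

lemma w_tsum_rpow_ne_top {s : ℝ} (hs : 0 < s) : (∑' k, w k ^ s) ≠ ⊤ := by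
  have hρ0 : (0:ℝ) < (2:ℝ)⁻¹ ^ s := by positivity
  have hρ1 : (2:ℝ)⁻¹ ^ s < 1 := by
    apply Real.rpow_lt_one (by norm_num) (by norm_num) hs
  have hsum : Summable (fun k : ℕ => ((2:ℝ)⁻¹ ^ s) ^ (k+1)) := by
    simpa [pow_succ, mul_comm] using (summable_geometric_of_lt_one hρ0.le hρ1).mul_left ((2:ℝ)⁻¹ ^ s)
  calc (∑' k, w k ^ s) = ∑' k, ENNReal.ofReal (((2:ℝ)⁻¹ ^ s) ^ (k+1)) := by
        simp_rw [w_rpow _ hs]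
    _ = ENNReal.ofReal (∑' k, ((2:ℝ)⁻¹ ^ s) ^ (k+1)) :=
        (ENNReal.ofReal_tsum_of_nonneg (fun k => by positivity) hsum).symm
    _ ≠ ⊤ := ENNReal.ofReal_ne_top

/-- Lemma A: power of weighted sum controlled by weighted sum of powers. -/
lemma lemmaA {r : ℝ} (hr : 0 < r) :
    ∃ K : ℝ≥0∞, K ≠ ⊤ ∧ ∀ y : ℕ → ℝ≥0∞,
      (∑' k, w k * y k) ^ r ≤ K * ∑' k, w k ^ (r/2) * y k ^ r := by
  rcases le_or_gt r 1 with hr1 | hr1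
  · refine ⟨1, ENNReal.one_ne_top, fun y => ?_⟩
    rw [one_mul]
    calc (∑' k, w k * y k) ^ r ≤ ∑' k, (w k * y k) ^ r := tsum_rpow_le hr hr1 _
      _ ≤ ∑' k, w k ^ (r/2) * y k ^ r := by
          refine ENNReal.tsum_le_tsum (fun k => ?_)
          rw [ENNReal.mul_rpow_of_nonneg _ _ hr.le]
          exact mul_le_mul_left
            (ENNReal.rpow_le_rpow_of_exponent_ge (w_le_one k) (by linarith)) _
  · -- Hölder case
    set r' : ℝ := r / (r - 1) with hr'def
    have hconj : r'.HolderConjugate r := ((Real.holderConjugate_iff_eq_conjExponent hr1).mpr rfl).symm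
    set M : ℝ≥0∞ := ∑' k, w k ^ (r'/2) with hM
    have hM_ne : M ≠ ⊤ := w_tsum_rpow_ne_top (by
      have : 0 < r' := hconj.pos
      linarith)
    have hr'pos : 0 < r' := hconj.pos
    refine ⟨M ^ (r/r'), ENNReal.rpow_ne_top_of_nonneg (div_nonneg hr.le hr'pos.le) hM_ne,
      fun y => ?_⟩
    have hold := ENNReal.lintegral_mul_le_Lp_mul_Lq (Measure.count (α := ℕ)) hconj
      (f := fun k => w k ^ ((1:ℝ)/2)) (g := fun k => w k ^ ((1:ℝ)/2) * y k)
      (Measurable.of_discrete.aemeasurable) (Measurable.of_discrete.aemeasurable)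
    simp only [Pi.mul_apply, MeasureTheory.lintegral_count] at hold
    have hsplit : ∀ k, w k * y k = w k ^ ((1:ℝ)/2) * (w k ^ ((1:ℝ)/2) * y k) := by
      intro k
      rw [← mul_assoc, ← ENNReal.rpow_add_of_nonneg _ _ (by norm_num) (by norm_num)]
      norm_num
    have h1 : (∑' k, w k * y k) ≤
        (∑' k, (w k ^ ((1:ℝ)/2)) ^ r') ^ (1/r') * (∑' k, (w k ^ ((1:ℝ)/2) * y k) ^ r) ^ (1/r) := by
      calc (∑' k, w k * y k) = ∑' k, w k ^ ((1:ℝ)/2) * (w k ^ ((1:ℝ)/2) * y k) := by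
            exact tsum_congr hsplit
        _ ≤ _ := hold
    have h2 : ∀ k, (w k ^ ((1:ℝ)/2)) ^ r' = w k ^ (r'/2) := by
      intro k; rw [← ENNReal.rpow_mul]; ring_nf
    have h3 : ∀ k, (w k ^ ((1:ℝ)/2) * y k) ^ r = w k ^ (r/2) * y k ^ r := by
      intro k
      rw [ENNReal.mul_rpow_of_nonneg _ _ hr.le, ← ENNReal.rpow_mul]
      ring_nf
    simp_rw [h2, h3] at h1
    calc (∑' k, w k * y k) ^ r
        ≤ (M ^ (1/r') * (∑' k, w k ^ (r/2) * y k ^ r) ^ (1/r)) ^ r :=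
          ENNReal.rpow_le_rpow h1 hr.le
      _ = M ^ (r/r') * ∑' k, w k ^ (r/2) * y k ^ r := by
          rw [ENNReal.mul_rpow_of_nonneg _ _ hr.le, ← ENNReal.rpow_mul, ← ENNReal.rpow_mul,
            one_div, one_div, inv_mul_cancel₀ hr.ne', ENNReal.rpow_one,
            mul_comm r'⁻¹ r, ← div_eq_mul_inv]



/-- substitution `s = c * t` in a weighted lintegral over `(0,1)` -/
lemma lint_scale {c : ℝ} (hc : 0 < c) (ψ : ℝ → ℝ≥0∞)
    (hψ : AEMeasurable ψ (volume.restrict (Ioo 0 c))) :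
    ∫⁻ t in Ioo (0:ℝ) 1, ψ (c * t) = ENNReal.ofReal c⁻¹ * ∫⁻ s in Ioo (0:ℝ) c, ψ s := by
  have hpre : (fun x => c * x) ⁻¹' (Ioo 0 c) = Ioo (0:ℝ) 1 := by
    ext x
    simp only [mem_preimage, mem_Ioo]
    constructor
    · rintro ⟨h1, h2⟩
      have hx : 0 < x := by
        have := div_pos h1 hc
        rwa [mul_div_cancel_left₀ _ hc.ne'] at this
      refine ⟨hx, ?_⟩
      by_contra hx1
      push_neg at hx1
      nlinarith
    · rintro ⟨h1, h2⟩
      exact ⟨mul_pos hc h1, by nlinarith⟩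
  have hmap : Measure.map (fun x => c * x) (volume.restrict (Ioo 0 1))
      = ENNReal.ofReal c⁻¹ • volume.restrict (Ioo 0 c) := by
    rw [← hpre, ← Measure.restrict_map (measurable_const_mul c) measurableSet_Ioo,
      Real.map_volume_mul_left hc.ne', abs_of_pos (inv_pos.mpr hc), Measure.restrict_smul]
  have hψ' : AEMeasurable ψ (Measure.map (fun x => c * x) (volume.restrict (Ioo 0 1))) := by
    rw [hmap]; exact hψ.smul_measure _
  calc ∫⁻ t in Ioo (0:ℝ) 1, ψ (c * t)
      = ∫⁻ s, ψ s ∂(Measure.map (fun x => c * x) (volume.restrict (Ioo 0 1))) :=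
        (lintegral_map' hψ' (measurable_const_mul c).aemeasurable).symm
    _ = ENNReal.ofReal c⁻¹ * ∫⁻ s in Ioo (0:ℝ) c, ψ s := by
        rw [hmap, lintegral_smul_measure, smul_eq_mul]

/-- composing an a.e.-measurable function on `(0,1)` with scaling by `c ∈ (0,1]` -/
lemma aemeas_scale {g : ℝ → ℝ} (hg : AEMeasurable g (volume.restrict (Ioo 0 1)))
    {c : ℝ} (hc0 : 0 < c) (hc1 : c ≤ 1) :
    AEMeasurable (fun t => g (c * t)) (volume.restrict (Ioo 0 1)) := by
  obtain ⟨g₀, hg₀, heq⟩ := hg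
  refine ⟨fun t => g₀ (c * t), hg₀.comp (measurable_const_mul c), ?_⟩
  have hE : volume ({u | g u ≠ g₀ u} ∩ Ioo 0 1) = 0 := by
    have := ae_iff.mp heq
    rwa [Measure.restrict_apply' measurableSet_Ioo] at this
  rw [Filter.EventuallyEq, ae_iff, Measure.restrict_apply' measurableSet_Ioo]
  refine measure_mono_null (fun t ht => ?_) (?_ : volume ((fun x => c*x) ⁻¹' ({u | g u ≠ g₀ u} ∩ Ioo 0 1)) = 0)
  · obtain ⟨hne, ht0, ht1⟩ := ht
    refine ⟨hne, mul_pos hc0 ht0, ?_⟩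
    calc c * t < c * 1 := by nlinarith
      _ ≤ 1 := by linarith
  · rw [Real.volume_preimage_mul_left hc0.ne', hE, mul_zero]

/-- summability of the series giving the Hardy constant -/
lemma const_summable {ρ : ℝ} (hρ0 : 0 < ρ) (hρ1 : ρ < 1) {m : ℝ} (hm : 0 ≤ m) (L : ℝ) (hL : 0 < L) :
    Summable (fun k : ℕ => ρ ^ (k+1) * (1 + (k+1) * L) ^ m) := by
  set n : ℕ := ⌈m⌉₊ with hn
  have key : ∀ k : ℕ, ρ ^ (k+1) * (1 + (k+1) * L) ^ m
      ≤ (1 + L) ^ m * (((k:ℝ)+1) ^ n * ρ ^ (k+1)) := by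
    intro k
    have hbase : (1:ℝ) ≤ 1 + (k+1) * L := by
      have : (0:ℝ) ≤ (k+1) * L := by positivity
      linarith
    have hb2 : (1 + ((k:ℝ)+1) * L) ≤ (1 + L) * ((k:ℝ)+1) := by nlinarith [Nat.cast_nonneg (α := ℝ) k]
    have hkn : ((k:ℝ)+1) ^ m ≤ ((k:ℝ)+1) ^ (n:ℝ) :=
      Real.rpow_le_rpow_of_exponent_le (by norm_num)
        (Nat.le_ceil m)
    calc ρ ^ (k+1) * (1 + ((k:ℝ)+1) * L) ^ m
        ≤ ρ ^ (k+1) * ((1 + L) * ((k:ℝ)+1)) ^ m := by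
          refine mul_le_mul_of_nonneg_left ?_ (by positivity)
          exact Real.rpow_le_rpow (by linarith) hb2 hm
      _ = ρ ^ (k+1) * ((1 + L) ^ m * ((k:ℝ)+1) ^ m) := by
          rw [Real.mul_rpow (by linarith) (by positivity)]
      _ ≤ ρ ^ (k+1) * ((1 + L) ^ m * ((k:ℝ)+1) ^ (n:ℝ)) := by
          refine mul_le_mul_of_nonneg_left (mul_le_mul_of_nonneg_left hkn (by positivity)) (by positivity)
      _ = (1 + L) ^ m * (((k:ℝ)+1) ^ n * ρ ^ (k+1)) := by
          rw [Real.rpow_natCast]; ring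
  have hgeo : Summable (fun k : ℕ => ((k:ℝ)+1) ^ n * ρ ^ (k+1)) := by
    have h0 : Summable (fun j : ℕ => (j:ℝ) ^ n * ρ ^ j) :=
      summable_pow_mul_geometric_of_norm_lt_one n (by rwa [Real.norm_eq_abs, abs_of_pos hρ0])
    have := h0.comp_injective (Nat.succ_injective)
    refine this.congr (fun k => ?_)
    simp only [Function.comp, Nat.succ_eq_add_one]
    push_cast
    ring
  refine Summable.of_nonneg_of_le (fun k => by positivity) key (hgeo.mul_left _)



noncomputable def Lw (β t : ℝ) : ℝ≥0∞ :=
  ENNReal.ofReal ((1 - Real.log t) ^ β) * (ENNReal.ofReal t)⁻¹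

noncomputable def Fp (g : ℝ → ℝ) (p t : ℝ) : ℝ≥0∞ :=
  ∫⁻ u in Ioc (0:ℝ) t, ENNReal.ofReal (g u ^ p)

lemma Lw_meas (β : ℝ) : Measurable (Lw β) :=
  (((measurable_const.sub Real.measurable_log).pow measurable_const).ennreal_ofReal).mul
    (measurable_id.ennreal_ofReal.inv)

lemma ofReal_rpow_comp {x : ℝ} (hx : 0 ≤ x) {p r : ℝ} (hp : 0 < p) (hr : 0 < r) :
    ENNReal.ofReal (x ^ p) ^ r = ENNReal.ofReal (x ^ (p * r)) := by
  rcases eq_or_lt_of_le hx with h | h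
  · rw [← h, Real.zero_rpow hp.ne', Real.zero_rpow (by positivity : (0:ℝ) < p*r).ne',
      ENNReal.ofReal_zero, ENNReal.zero_rpow_of_pos hr]
  · rw [ENNReal.ofReal_rpow_of_pos (Real.rpow_pos_of_pos h p), ← Real.rpow_mul hx]

lemma hardy (p q b : ℝ) (hp : 0 < p) (hq : 0 < q) (hb : b < 0) :
    ∃ K : ℝ≥0∞, K ≠ ⊤ ∧ ∀ g : ℝ → ℝ, AntitoneOn g (Ioo 0 1) →
      (∀ t ∈ Ioo (0:ℝ) 1, 0 ≤ g t) →
      (∫⁻ t in Ioo (0:ℝ) 1, Lw (b*q) t * ((ENNReal.ofReal t)⁻¹ * Fp g p t) ^ (q/p))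
        ≤ K * ∫⁻ t in Ioo (0:ℝ) 1, Lw (b*q) t * ENNReal.ofReal (g t ^ q) := by
  have hr : 0 < q / p := div_pos hq hp
  set r := q / p with hrdef
  have hpr : p * r = q := by rw [hrdef]; field_simp
  obtain ⟨K₁, hK₁, hA⟩ := lemmaA hr
  set β := b * q with hβ
  have hβneg : β < 0 := mul_neg_of_neg_of_pos hb hq
  have hlog2 : 0 < Real.log 2 := Real.log_pos (by norm_num)
  set Ck : ℕ → ℝ≥0∞ := fun k => ENNReal.ofReal ((1 + ((k:ℝ)+1) * Real.log 2) ^ (-β)) with hCk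
  set M := ∑' k, w k ^ (r/2) * Ck k with hM
  have hM_ne : M ≠ ⊤ := by
    have hsum := const_summable (ρ := (2:ℝ)⁻¹ ^ (r/2))
      (by positivity) (Real.rpow_lt_one (by norm_num) (by norm_num) (by positivity))
      (m := -β) (by linarith) (Real.log 2) hlog2
    have hMeq : M = ENNReal.ofReal
        (∑' k : ℕ, ((2:ℝ)⁻¹ ^ (r/2)) ^ (k+1) * (1 + ((k:ℝ)+1) * Real.log 2) ^ (-β)) := by
      rw [ENNReal.ofReal_tsum_of_nonneg (fun k => by positivity) hsum, hM]
      refine tsum_congr (fun k => ?_)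
      rw [w_rpow _ (by positivity), hCk, ← ENNReal.ofReal_mul (by positivity)]
    rw [hMeq]; exact ENNReal.ofReal_ne_top
  refine ⟨K₁ * M, ENNReal.mul_ne_top hK₁ hM_ne, fun g hg hg0 => ?_⟩
  set d : ℕ → ℝ := fun k => (2:ℝ)⁻¹ ^ (k+1) with hd
  have hd0 : ∀ k, 0 < d k := fun k => by positivity
  have hd2 : ∀ k, d k * 2 = (2:ℝ)⁻¹ ^ k := by
    intro k
    show (2:ℝ)⁻¹ ^ (k+1) * 2 = (2:ℝ)⁻¹ ^ k
    rw [pow_succ]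
    ring
  have hd1 : ∀ k, d k < 1 := fun k => by
    have h1 : d k * 2 ≤ 1 := by rw [hd2]; exact pow_le_one₀ (by norm_num) (by norm_num)
    nlinarith [hd0 k]
  have hg_ae : AEMeasurable g (volume.restrict (Ioo 0 1)) :=
    aemeasurable_restrict_of_antitoneOn measurableSet_Ioo hg
  set S₀ := ∫⁻ t in Ioo (0:ℝ) 1, Lw β t * ENNReal.ofReal (g t ^ q) with hS₀
  -- pointwise dyadic estimate
  have hpt : ∀ t ∈ Ioo (0:ℝ) 1,
      Lw β t * ((ENNReal.ofReal t)⁻¹ * Fp g p t) ^ r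
        ≤ K₁ * ∑' k, w k ^ (r/2) * (Lw β t * ENNReal.ofReal (g (d k * t) ^ q)) := by
    intro t ht
    obtain ⟨ht0, ht1⟩ := ht
    have hoft0 : ENNReal.ofReal t ≠ 0 := by
      simp only [ne_eq, ENNReal.ofReal_eq_zero, not_le]; exact ht0
    have hoftop : ENNReal.ofReal t ≠ ⊤ := ENNReal.ofReal_ne_top
    have hmemdk : ∀ k, d k * t ∈ Ioo (0:ℝ) 1 := fun k =>
      ⟨mul_pos (hd0 k) ht0, by nlinarith [hd0 k, hd1 k]⟩
    have hcover : Ioc (0:ℝ) t = ⋃ k : ℕ, Ioc (d k * t) (d k * 2 * t) := by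
      ext x
      simp only [mem_Ioc, mem_iUnion]
      constructor
      · rintro ⟨hx0, hxt⟩
        have hex : ∃ n, d n * t < x := by
          obtain ⟨n, hn⟩ := exists_pow_lt_of_lt_one (div_pos hx0 ht0)
            (by norm_num : (2:ℝ)⁻¹ < 1)
          refine ⟨n, ?_⟩
          have hle : d n ≤ (2:ℝ)⁻¹ ^ n :=
            pow_le_pow_of_le_one (by norm_num) (by norm_num) (by omega)
          calc d n * t ≤ (2:ℝ)⁻¹ ^ n * t := by nlinarith
            _ < (x / t) * t := by
                exact mul_lt_mul_of_pos_right hn ht0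
            _ = x := div_mul_cancel₀ _ ht0.ne'
        classical
        refine ⟨Nat.find hex, Nat.find_spec hex, ?_⟩
        rcases Nat.eq_zero_or_pos (Nat.find hex) with hk0 | hkpos
        · rw [hk0]
          have : d 0 * 2 * t = t := by rw [hd2]; simp
          rw [this]; exact hxt
        · have hkm := Nat.find_min hex (Nat.sub_lt hkpos one_pos)
          push_neg at hkm
          have hdd : d (Nat.find hex - 1) = d (Nat.find hex) * 2 := by
            rw [hd2]
            show (2:ℝ)⁻¹ ^ (Nat.find hex - 1 + 1) = (2:ℝ)⁻¹ ^ (Nat.find hex)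
            congr 1
            omega
          calc x ≤ d (Nat.find hex - 1) * t := hkm
            _ = d (Nat.find hex) * 2 * t := by rw [hdd]
      · rintro ⟨k, h1, h2⟩
        have h3 : d k * 2 ≤ 1 := by
          rw [hd2]; exact pow_le_one₀ (by norm_num) (by norm_num)
        refine ⟨lt_of_le_of_lt (by positivity) h1, ?_⟩
        nlinarith
    have hFle : Fp g p t ≤ ∑' k, w k * ENNReal.ofReal (g (d k * t) ^ p) * ENNReal.ofReal t := by
      calc Fp g p t
          = ∫⁻ u in ⋃ k : ℕ, Ioc (d k * t) (d k * 2 * t), ENNReal.ofReal (g u ^ p) := by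
            show (∫⁻ u in Ioc (0:ℝ) t, ENNReal.ofReal (g u ^ p)) = _
            rw [hcover]
        _ ≤ ∑' k, ∫⁻ u in Ioc (d k * t) (d k * 2 * t), ENNReal.ofReal (g u ^ p) :=
            lintegral_iUnion_le _ _
        _ ≤ ∑' k, w k * ENNReal.ofReal (g (d k * t) ^ p) * ENNReal.ofReal t := by
            refine ENNReal.tsum_le_tsum (fun k => ?_)
            have h3 : d k * 2 ≤ 1 := by
              rw [hd2]; exact pow_le_one₀ (by norm_num) (by norm_num)
            have hsub : ∀ u ∈ Ioc (d k * t) (d k * 2 * t),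
                ENNReal.ofReal (g u ^ p) ≤ ENNReal.ofReal (g (d k * t) ^ p) := by
              intro u hu
              obtain ⟨hu1, hu2⟩ := hu
              have hu01 : u ∈ Ioo (0:ℝ) 1 := by
                constructor
                · exact lt_trans (by positivity) hu1
                · nlinarith
              exact ENNReal.ofReal_le_ofReal
                (Real.rpow_le_rpow (hg0 u hu01) (hg (hmemdk k) hu01 hu1.le) hp.le)
            calc ∫⁻ u in Ioc (d k * t) (d k * 2 * t), ENNReal.ofReal (g u ^ p)
                ≤ ∫⁻ _ in Ioc (d k * t) (d k * 2 * t), ENNReal.ofReal (g (d k * t) ^ p) :=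
                  setLIntegral_mono' measurableSet_Ioc hsub
              _ = ENNReal.ofReal (g (d k * t) ^ p) * volume (Ioc (d k * t) (d k * 2 * t)) :=
                  setLIntegral_const _ _
              _ = w k * ENNReal.ofReal (g (d k * t) ^ p) * ENNReal.ofReal t := by
                  rw [Real.volume_Ioc, show d k * 2 * t - d k * t = d k * t by ring,
                    ENNReal.ofReal_mul (hd0 k).le]
                  rw [show w k = ENNReal.ofReal (d k) from rfl]
                  ring
    have hFsum : (ENNReal.ofReal t)⁻¹ * Fp g p t
        ≤ ∑' k, w k * ENNReal.ofReal (g (d k * t) ^ p) := by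
      calc (ENNReal.ofReal t)⁻¹ * Fp g p t
          ≤ (ENNReal.ofReal t)⁻¹
            * ((∑' k, w k * ENNReal.ofReal (g (d k * t) ^ p)) * ENNReal.ofReal t) :=
            mul_le_mul_right (hFle.trans_eq ENNReal.tsum_mul_right) _
        _ = ∑' k, w k * ENNReal.ofReal (g (d k * t) ^ p) := by
            rw [mul_comm, mul_assoc, ENNReal.mul_inv_cancel hoft0 hoftop, mul_one]
    have h1 : ((ENNReal.ofReal t)⁻¹ * Fp g p t) ^ r
        ≤ K₁ * ∑' k, w k ^ (r/2) * ENNReal.ofReal (g (d k * t) ^ q) := by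
      calc ((ENNReal.ofReal t)⁻¹ * Fp g p t) ^ r
          ≤ (∑' k, w k * ENNReal.ofReal (g (d k * t) ^ p)) ^ r :=
            ENNReal.rpow_le_rpow hFsum hr.le
        _ ≤ K₁ * ∑' k, w k ^ (r/2) * ENNReal.ofReal (g (d k * t) ^ p) ^ r := hA _
        _ = K₁ * ∑' k, w k ^ (r/2) * ENNReal.ofReal (g (d k * t) ^ q) := by
            congr 1
            refine tsum_congr fun k => ?_
            rw [ofReal_rpow_comp (hg0 _ (hmemdk k)) hp hr, hpr]
    calc Lw β t * ((ENNReal.ofReal t)⁻¹ * Fp g p t) ^ r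
        ≤ Lw β t * (K₁ * ∑' k, w k ^ (r/2) * ENNReal.ofReal (g (d k * t) ^ q)) :=
          mul_le_mul_right h1 _
      _ = K₁ * ∑' k, w k ^ (r/2) * (Lw β t * ENNReal.ofReal (g (d k * t) ^ q)) := by
          rw [← mul_assoc, mul_comm (Lw β t) K₁, mul_assoc, ← ENNReal.tsum_mul_left]
          congr 1
          exact tsum_congr fun k => by ring
  -- per-k integral bound via substitution
  have hwtop : ∀ k : ℕ, w k ^ (r/2) ≠ ⊤ := fun k =>
    ENNReal.rpow_ne_top_of_nonneg (by positivity) ENNReal.ofReal_ne_top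
  have hTk : ∀ k : ℕ,
      (∫⁻ t in Ioo (0:ℝ) 1, Lw β t * ENNReal.ofReal (g (d k * t) ^ q)) ≤ Ck k * S₀ := by
    intro k
    have hc0 : 0 < d k := hd0 k
    have hc1 : d k < 1 := hd1 k
    set c := d k with hc
    set ψ : ℝ → ℝ≥0∞ := fun s =>
      ENNReal.ofReal ((1 - Real.log (s / c)) ^ β) * (ENNReal.ofReal (s / c))⁻¹
        * ENNReal.ofReal (g s ^ q) with hψ
    have hψae : AEMeasurable ψ (volume.restrict (Ioo 0 c)) := by
      have hg' : AEMeasurable g (volume.restrict (Ioo 0 c)) :=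
        hg_ae.mono_measure (Measure.restrict_mono (Ioo_subset_Ioo le_rfl hc1.le) le_rfl)
      exact ((((measurable_const.sub
          (Real.measurable_log.comp (measurable_id.div_const c))).pow
          measurable_const).ennreal_ofReal.mul
          ((measurable_id.div_const c).ennreal_ofReal.inv)).aemeasurable.mul
          ((hg'.pow aemeasurable_const).ennreal_ofReal))
    have hcomp : ∀ t : ℝ, Lw β t * ENNReal.ofReal (g (c * t) ^ q) = ψ (c * t) := by
      intro t
      show _ = ENNReal.ofReal ((1 - Real.log (c * t / c)) ^ β) * (ENNReal.ofReal (c * t / c))⁻¹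
        * ENNReal.ofReal (g (c * t) ^ q)
      rw [mul_div_cancel_left₀ _ hc0.ne']
      rfl
    have hlogc : Real.log c = -(((k:ℝ)+1) * Real.log 2) := by
      show Real.log ((2:ℝ)⁻¹ ^ (k+1)) = _
      rw [Real.log_pow, Real.log_inv]
      push_cast
      ring
    have hofc : ENNReal.ofReal c⁻¹ * ENNReal.ofReal c = 1 := by
      rw [← ENNReal.ofReal_mul (by positivity), inv_mul_cancel₀ hc0.ne', ENNReal.ofReal_one]
    have hψle : ∀ s ∈ Ioo (0:ℝ) c,
        ψ s ≤ (Ck k * ENNReal.ofReal c) * (Lw β s * ENNReal.ofReal (g s ^ q)) := by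
      intro s hs
      obtain ⟨hs0, hsc⟩ := hs
      have hs1 : s < 1 := lt_trans hsc hc1
      have hins : 0 < 1 - Real.log s := by
        have := Real.log_neg hs0 hs1
        linarith
      have hlogsc : Real.log s < -(((k:ℝ)+1) * Real.log 2) := by
        rw [← hlogc]
        exact Real.log_lt_log hs0 hsc
      have hA1 : 1 ≤ 1 - Real.log (s / c) := by
        rw [Real.log_div hs0.ne' hc0.ne', hlogc]
        linarith
      have hkL : (0:ℝ) ≤ ((k:ℝ)+1) * Real.log 2 := by positivity
      have hfactor : (1 - Real.log (s/c)) ^ β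
          ≤ (1 + ((k:ℝ)+1) * Real.log 2) ^ (-β) * (1 - Real.log s) ^ β := by
        set A := 1 - Real.log (s / c) with hAdef
        set cst := 1 + ((k:ℝ)+1) * Real.log 2 with hcst
        have hcst1 : 1 ≤ cst := by rw [hcst]; linarith
        have hexp : 1 - Real.log s = A + ((k:ℝ)+1) * Real.log 2 := by
          rw [hAdef, Real.log_div hs0.ne' hc0.ne', hlogc]
          ring
        have hdivle : (1 - Real.log s) / cst ≤ A := by
          rw [div_le_iff₀ (by linarith)]
          nlinarith
        have hdivpos : 0 < (1 - Real.log s) / cst := by positivity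
        calc A ^ β ≤ ((1 - Real.log s) / cst) ^ β :=
              Real.rpow_le_rpow_of_nonpos hdivpos hdivle hβneg.le
          _ = (1 - Real.log s) ^ β * cst ^ (-β) := by
              rw [Real.div_rpow hins.le (by linarith), Real.rpow_neg (by linarith),
                div_eq_mul_inv]
          _ = cst ^ (-β) * (1 - Real.log s) ^ β := by ring
      have hinv : (ENNReal.ofReal (s/c))⁻¹ = ENNReal.ofReal c * (ENNReal.ofReal s)⁻¹ := by
        rw [← ENNReal.ofReal_inv_of_pos (by positivity), ← ENNReal.ofReal_inv_of_pos hs0,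
          ← ENNReal.ofReal_mul hc0.le, inv_div, div_eq_mul_inv]
      calc ψ s = ENNReal.ofReal ((1 - Real.log (s/c)) ^ β) * (ENNReal.ofReal (s/c))⁻¹
            * ENNReal.ofReal (g s ^ q) := rfl
        _ ≤ (Ck k * ENNReal.ofReal ((1 - Real.log s) ^ β))
            * (ENNReal.ofReal c * (ENNReal.ofReal s)⁻¹) * ENNReal.ofReal (g s ^ q) := by
            refine mul_le_mul' (mul_le_mul' ?_ (le_of_eq hinv)) le_rfl
            calc ENNReal.ofReal ((1 - Real.log (s/c)) ^ β)
                ≤ ENNReal.ofReal ((1 + ((k:ℝ)+1) * Real.log 2) ^ (-β) * (1 - Real.log s) ^ β) :=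
                  ENNReal.ofReal_le_ofReal hfactor
              _ = Ck k * ENNReal.ofReal ((1 - Real.log s) ^ β) := by
                  rw [ENNReal.ofReal_mul (by positivity)]
        _ = (Ck k * ENNReal.ofReal c) * (Lw β s * ENNReal.ofReal (g s ^ q)) := by
            show _ = (Ck k * ENNReal.ofReal c) * ((ENNReal.ofReal ((1 - Real.log s) ^ β)
              * (ENNReal.ofReal s)⁻¹) * ENNReal.ofReal (g s ^ q))
            ring
    have hCkc_ne : Ck k * ENNReal.ofReal c ≠ ⊤ :=
      ENNReal.mul_ne_top ENNReal.ofReal_ne_top ENNReal.ofReal_ne_top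
    calc (∫⁻ t in Ioo (0:ℝ) 1, Lw β t * ENNReal.ofReal (g (c * t) ^ q))
        = ∫⁻ t in Ioo (0:ℝ) 1, ψ (c * t) := by
          exact setLIntegral_congr_fun measurableSet_Ioo (fun t _ => hcomp t)
      _ = ENNReal.ofReal c⁻¹ * ∫⁻ s in Ioo (0:ℝ) c, ψ s := lint_scale hc0 ψ hψae
      _ ≤ ENNReal.ofReal c⁻¹ * ∫⁻ s in Ioo (0:ℝ) c,
            (Ck k * ENNReal.ofReal c) * (Lw β s * ENNReal.ofReal (g s ^ q)) :=
          mul_le_mul_right (setLIntegral_mono' measurableSet_Ioo hψle) _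
      _ = ENNReal.ofReal c⁻¹ * ((Ck k * ENNReal.ofReal c)
            * ∫⁻ s in Ioo (0:ℝ) c, Lw β s * ENNReal.ofReal (g s ^ q)) := by
          rw [lintegral_const_mul' _ _ hCkc_ne]
      _ ≤ ENNReal.ofReal c⁻¹ * ((Ck k * ENNReal.ofReal c) * S₀) := by
          refine mul_le_mul_right (mul_le_mul_right ?_ _) _
          rw [hS₀]
          exact lintegral_mono_set (Ioo_subset_Ioo le_rfl hc1.le)
      _ = (ENNReal.ofReal c⁻¹ * ENNReal.ofReal c) * (Ck k * S₀) := by ring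
      _ = Ck k * S₀ := by rw [hofc, one_mul]
  -- put everything together
  have hf_aemeas : ∀ k : ℕ, AEMeasurable
      (fun t => w k ^ (r/2) * (Lw β t * ENNReal.ofReal (g (d k * t) ^ q)))
      (volume.restrict (Ioo 0 1)) := by
    intro k
    have hgs := aemeas_scale hg_ae (hd0 k) (hd1 k).le
    exact aemeasurable_const.mul (((Lw_meas β).aemeasurable).mul
      ((hgs.pow aemeasurable_const).ennreal_ofReal))
  calc (∫⁻ t in Ioo (0:ℝ) 1, Lw β t * ((ENNReal.ofReal t)⁻¹ * Fp g p t) ^ r)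
      ≤ ∫⁻ t in Ioo (0:ℝ) 1,
          K₁ * ∑' k, w k ^ (r/2) * (Lw β t * ENNReal.ofReal (g (d k * t) ^ q)) :=
        setLIntegral_mono' measurableSet_Ioo hpt
    _ = K₁ * ∫⁻ t in Ioo (0:ℝ) 1,
          ∑' k, w k ^ (r/2) * (Lw β t * ENNReal.ofReal (g (d k * t) ^ q)) :=
        lintegral_const_mul' _ _ hK₁
    _ = K₁ * ∑' k, ∫⁻ t in Ioo (0:ℝ) 1,
          w k ^ (r/2) * (Lw β t * ENNReal.ofReal (g (d k * t) ^ q)) := by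
        rw [lintegral_tsum hf_aemeas]
    _ = K₁ * ∑' k, w k ^ (r/2)
          * ∫⁻ t in Ioo (0:ℝ) 1, Lw β t * ENNReal.ofReal (g (d k * t) ^ q) := by
        congr 1
        exact tsum_congr fun k => lintegral_const_mul' _ _ (hwtop k)
    _ ≤ K₁ * ∑' k, w k ^ (r/2) * (Ck k * S₀) :=
        mul_le_mul_right (ENNReal.tsum_le_tsum fun k => mul_le_mul_right (hTk k) _) _
    _ = (K₁ * M) * S₀ := by
        have : ∑' k, w k ^ (r/2) * (Ck k * S₀) = (∑' k, w k ^ (r/2) * Ck k) * S₀ := by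
          rw [← ENNReal.tsum_mul_right]
          exact tsum_congr fun k => by ring
        rw [this, hM, ← mul_assoc]

lemma ofReal_rpow' {x : ℝ} (hx : 0 ≤ x) {r : ℝ} (hr : 0 < r) :
    ENNReal.ofReal x ^ r = ENNReal.ofReal (x ^ r) := by
  rcases eq_or_lt_of_le hx with h | h
  · rw [← h, Real.zero_rpow hr.ne', ENNReal.ofReal_zero, ENNReal.zero_rpow_of_pos hr]
  · exact ENNReal.ofReal_rpow_of_pos h

end LIZ

open MeasureTheory Set

/-- The limiting interpolation space `(L_p(Ω), L_∞(Ω))_{(1,b),q}` coincides with the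
Lorentz–Zygmund space `L_{∞,q}(log L)_b(Ω)` (here `|Ω| = 1`): for `0 < p < ∞`,
`0 < q < ∞` and `b < -1/q`, with equivalence constants independent of the function,
`(∫₀^1 (t^{-1/p}(1-log t)^b (∫₀^t f^*(u)^p du)^{1/p})^q dt/t)^{1/q}
  ≍ (∫₀^1 ((1-log t)^b f^*(t))^q dt/t)^{1/q}`,
expressed via the decreasing rearrangement `f^*`, i.e. via an arbitrary non-negative
decreasing function `g` on `(0,1)`. -/
theorem limiting_interpolation_LorentzZygmund (p q b : ℝ) (hp : 0 < p) (hq : 0 < q)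
    (hb : b < -(1/q)) :
    ∃ c C : ℝ, 0 < c ∧ 0 < C ∧ ∀ g : ℝ → ℝ,
      AntitoneOn g (Ioo (0:ℝ) 1) → (∀ t ∈ Ioo (0:ℝ) 1, 0 ≤ g t) →
      c * (∫ t in Ioo (0:ℝ) 1, ((1 - Real.log t) ^ b * g t) ^ q / t) ^ (1/q)
        ≤ (∫ t in Ioo (0:ℝ) 1,
            (t ^ (-(1/p)) * (1 - Real.log t) ^ b
              * (∫ u in Ioc (0:ℝ) t, g u ^ p) ^ (1/p)) ^ q / t) ^ (1/q)
      ∧ (∫ t in Ioo (0:ℝ) 1,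
            (t ^ (-(1/p)) * (1 - Real.log t) ^ b
              * (∫ u in Ioc (0:ℝ) t, g u ^ p) ^ (1/p)) ^ q / t) ^ (1/q)
        ≤ C * (∫ t in Ioo (0:ℝ) 1, ((1 - Real.log t) ^ b * g t) ^ q / t) ^ (1/q) := by
  have hb0 : b < 0 := lt_of_lt_of_le hb (neg_nonpos.mpr (one_div_pos.mpr hq).le)
  obtain ⟨K, hK, hhardy⟩ := LIZ.hardy p q b hp hq hb0
  set C : ℝ := (max 1 K.toReal) ^ (1/q) with hC
  have hmax1 : (0:ℝ) < max 1 K.toReal := lt_of_lt_of_le one_pos (le_max_left _ _)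
  have hC0 : 0 < C := Real.rpow_pos_of_pos hmax1 _
  refine ⟨1, C, one_pos, hC0, fun g hg hg0 => ?_⟩
  have hg_ae : AEMeasurable g (volume.restrict (Ioo 0 1)) :=
    aemeasurable_restrict_of_antitoneOn measurableSet_Ioo hg
  have hq' : (1:ℝ)/q ≠ 0 := one_div_ne_zero hq.ne'
  -- small side
  set Slin := ∫⁻ t in Ioo (0:ℝ) 1, LIZ.Lw (b*q) t * ENNReal.ofReal (g t ^ q) with hSlin
  have hSrepr : (∫ t in Ioo (0:ℝ) 1, ((1 - Real.log t) ^ b * g t) ^ q / t) = Slin.toReal := by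
    have hSnn : 0 ≤ᵐ[volume.restrict (Ioo 0 1)]
        fun t => ((1 - Real.log t) ^ b * g t) ^ q / t := by
      refine (ae_restrict_iff' measurableSet_Ioo).mpr (ae_of_all _ fun t ht => ?_)
      obtain ⟨ht0, ht1⟩ := ht
      have hl : 0 < 1 - Real.log t := by
        have := Real.log_neg ht0 ht1; linarith
      exact div_nonneg (Real.rpow_nonneg
        (mul_nonneg (Real.rpow_nonneg hl.le b) (hg0 t ⟨ht0, ht1⟩)) q) ht0.le
    have hSmeas : AEStronglyMeasurable (fun t => ((1 - Real.log t) ^ b * g t) ^ q / t)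
        (volume.restrict (Ioo 0 1)) := by
      refine AEMeasurable.aestronglyMeasurable ?_
      exact ((((measurable_const.sub Real.measurable_log).pow
        measurable_const).aemeasurable.mul hg_ae).pow aemeasurable_const).div
        measurable_id.aemeasurable
    rw [integral_eq_lintegral_of_nonneg_ae hSnn hSmeas]
    congr 1
    refine setLIntegral_congr_fun measurableSet_Ioo (fun t ht => ?_)
    obtain ⟨ht0, ht1⟩ := ht
    have hl : 0 < 1 - Real.log t := by
      have := Real.log_neg ht0 ht1; linarith
    have hre : ((1 - Real.log t) ^ b * g t) ^ q / t
        = (1 - Real.log t) ^ (b*q) * (g t ^ q) * t⁻¹ := by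
      rw [Real.mul_rpow (Real.rpow_nonneg hl.le b) (hg0 t ⟨ht0, ht1⟩),
        ← Real.rpow_mul hl.le, div_eq_mul_inv]
    rw [hre, ENNReal.ofReal_mul (mul_nonneg (Real.rpow_nonneg hl.le _)
        (Real.rpow_nonneg (hg0 t ⟨ht0, ht1⟩) _)),
      ENNReal.ofReal_mul (Real.rpow_nonneg hl.le _), ENNReal.ofReal_inv_of_pos ht0]
    show _ = ENNReal.ofReal ((1 - Real.log t) ^ (b*q)) * (ENNReal.ofReal t)⁻¹
      * ENNReal.ofReal (g t ^ q)
    ring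
  set Blin := ∫⁻ t in Ioo (0:ℝ) 1,
      LIZ.Lw (b*q) t * ((ENNReal.ofReal t)⁻¹ * LIZ.Fp g p t) ^ (q/p) with hBlin
  have hBle : Blin ≤ K * Slin := hhardy g hg hg0
  by_cases hfin : ∀ t ∈ Ioo (0:ℝ) 1, LIZ.Fp g p t ≠ ⊤
  · -- inner integral everywhere finite
    have hFrepr : ∀ t ∈ Ioo (0:ℝ) 1,
        (∫ u in Ioc (0:ℝ) t, g u ^ p) = (LIZ.Fp g p t).toReal := by
      intro t ht
      have hsub : Ioc (0:ℝ) t ⊆ Ioo 0 1 := fun u hu => ⟨hu.1, lt_of_le_of_lt hu.2 ht.2⟩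
      have hg' : AEMeasurable g (volume.restrict (Ioc 0 t)) :=
        hg_ae.mono_measure (Measure.restrict_mono hsub le_rfl)
      rw [integral_eq_lintegral_of_nonneg_ae
        ((ae_restrict_iff' measurableSet_Ioc).mpr
          (ae_of_all _ fun u hu => Real.rpow_nonneg (hg0 u (hsub hu)) p))
        ((hg'.pow aemeasurable_const).aestronglyMeasurable)]
      rfl
    have hFmono : Monotone (LIZ.Fp g p) :=
      fun t t' htt' => lintegral_mono_set (Ioc_subset_Ioc le_rfl htt')
    have hFmeas : Measurable (LIZ.Fp g p) := hFmono.measurable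
    have hBrepr : (∫ t in Ioo (0:ℝ) 1,
        (t ^ (-(1/p)) * (1 - Real.log t) ^ b
          * (∫ u in Ioc (0:ℝ) t, g u ^ p) ^ (1/p)) ^ q / t) = Blin.toReal := by
      have hBnn : 0 ≤ᵐ[volume.restrict (Ioo 0 1)] fun t =>
          (t ^ (-(1/p)) * (1 - Real.log t) ^ b
            * (∫ u in Ioc (0:ℝ) t, g u ^ p) ^ (1/p)) ^ q / t := by
        refine (ae_restrict_iff' measurableSet_Ioo).mpr (ae_of_all _ fun t ht => ?_)
        obtain ⟨ht0, ht1⟩ := ht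
        have hl : 0 < 1 - Real.log t := by
          have := Real.log_neg ht0 ht1; linarith
        show (0:ℝ) ≤ (t ^ (-(1/p)) * (1 - Real.log t) ^ b
          * (∫ u in Ioc (0:ℝ) t, g u ^ p) ^ (1/p)) ^ q / t
        rw [hFrepr t ⟨ht0, ht1⟩]
        refine div_nonneg (Real.rpow_nonneg ?_ q) ht0.le
        exact mul_nonneg (mul_nonneg (Real.rpow_nonneg ht0.le _)
          (Real.rpow_nonneg hl.le _)) (Real.rpow_nonneg ENNReal.toReal_nonneg _)
      have hBmeas : AEStronglyMeasurable (fun t =>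
          (t ^ (-(1/p)) * (1 - Real.log t) ^ b
            * (∫ u in Ioc (0:ℝ) t, g u ^ p) ^ (1/p)) ^ q / t)
          (volume.restrict (Ioo 0 1)) := by
        have hm : AEStronglyMeasurable (fun t =>
            (t ^ (-(1/p)) * (1 - Real.log t) ^ b
              * ((LIZ.Fp g p t).toReal) ^ (1/p)) ^ q / t)
            (volume.restrict (Ioo 0 1)) := by
          refine AEMeasurable.aestronglyMeasurable ?_
          exact ((((measurable_id.pow measurable_const).mul
            ((measurable_const.sub Real.measurable_log).pow measurable_const)).mul
            ((hFmeas.ennreal_toReal).pow measurable_const)).pow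
            measurable_const).aemeasurable.div measurable_id.aemeasurable
        refine hm.congr ?_
        refine (ae_restrict_iff' measurableSet_Ioo).mpr (ae_of_all _ fun t ht => ?_)
        show (t ^ (-(1/p)) * (1 - Real.log t) ^ b * ((LIZ.Fp g p t).toReal) ^ (1/p)) ^ q / t
          = (t ^ (-(1/p)) * (1 - Real.log t) ^ b
            * (∫ u in Ioc (0:ℝ) t, g u ^ p) ^ (1/p)) ^ q / t
        rw [hFrepr t ht]
      rw [integral_eq_lintegral_of_nonneg_ae hBnn hBmeas]
      congr 1
      refine setLIntegral_congr_fun measurableSet_Ioo (fun t ht => ?_)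
      obtain ⟨ht0, ht1⟩ := ht
      have hl : 0 < 1 - Real.log t := by
        have := Real.log_neg ht0 ht1; linarith
      have hXnn : (0:ℝ) ≤ (LIZ.Fp g p t).toReal := ENNReal.toReal_nonneg
      set X : ℝ := (LIZ.Fp g p t).toReal with hX
      have hre : (t ^ (-(1/p)) * (1 - Real.log t) ^ b * X ^ (1/p)) ^ q / t
          = (1 - Real.log t) ^ (b*q) * t⁻¹ * (t⁻¹ * X) ^ (q/p) := by
        rw [Real.mul_rpow (mul_nonneg (Real.rpow_nonneg ht0.le _) (Real.rpow_nonneg hl.le _))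
            (Real.rpow_nonneg hXnn _),
          Real.mul_rpow (Real.rpow_nonneg ht0.le _) (Real.rpow_nonneg hl.le _),
          ← Real.rpow_mul ht0.le, ← Real.rpow_mul hl.le, ← Real.rpow_mul hXnn,
          Real.mul_rpow (inv_nonneg.mpr ht0.le) hXnn,
          ← Real.rpow_neg_one t, ← Real.rpow_mul ht0.le]
        rw [div_eq_mul_inv]
        have e1 : -(1/p) * q = -1 * (q/p) := by ring
        have e2 : (1:ℝ)/p * q = q/p := by ring
        rw [e1, e2, Real.rpow_mul ht0.le,
          show t⁻¹ = t ^ (-1:ℝ) from (Real.rpow_neg_one t).symm]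
        ring
      rw [hFrepr t ⟨ht0, ht1⟩, ← hX, hre,
        ENNReal.ofReal_mul (by positivity), ENNReal.ofReal_mul (by positivity),
        ENNReal.ofReal_inv_of_pos ht0, ← LIZ.ofReal_rpow' (by positivity) (div_pos hq hp),
        ENNReal.ofReal_mul (by positivity), ENNReal.ofReal_inv_of_pos ht0,
        ENNReal.ofReal_toReal (hfin t ⟨ht0, ht1⟩)]
      rfl
    -- easy pointwise direction : Slin ≤ Blin
    have heasy : Slin ≤ Blin := by
      rw [hSlin, hBlin]
      refine setLIntegral_mono' measurableSet_Ioo (fun t ht => ?_)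
      obtain ⟨ht0, ht1⟩ := ht
      have hoft0 : ENNReal.ofReal t ≠ 0 := by
        simp only [ne_eq, ENNReal.ofReal_eq_zero, not_le]; exact ht0
      have hFt : ENNReal.ofReal (g t ^ p) * ENNReal.ofReal t ≤ LIZ.Fp g p t := by
        have hsub : ∀ u ∈ Ioc (0:ℝ) t,
            ENNReal.ofReal (g t ^ p) ≤ ENNReal.ofReal (g u ^ p) := by
          intro u hu
          have hu01 : u ∈ Ioo (0:ℝ) 1 := ⟨hu.1, lt_of_le_of_lt hu.2 ht1⟩
          exact ENNReal.ofReal_le_ofReal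
            (Real.rpow_le_rpow (hg0 t ⟨ht0, ht1⟩) (hg hu01 ⟨ht0, ht1⟩ hu.2) hp.le)
        calc ENNReal.ofReal (g t ^ p) * ENNReal.ofReal t
            = ENNReal.ofReal (g t ^ p) * volume (Ioc (0:ℝ) t) := by
              rw [Real.volume_Ioc, sub_zero]
          _ = ∫⁻ _ in Ioc (0:ℝ) t, ENNReal.ofReal (g t ^ p) := (setLIntegral_const _ _).symm
          _ ≤ ∫⁻ u in Ioc (0:ℝ) t, ENNReal.ofReal (g u ^ p) :=
              setLIntegral_mono' measurableSet_Ioc hsub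
      have h2 : ENNReal.ofReal (g t ^ p) ≤ (ENNReal.ofReal t)⁻¹ * LIZ.Fp g p t := by
        calc ENNReal.ofReal (g t ^ p)
            = (ENNReal.ofReal t)⁻¹ * (ENNReal.ofReal (g t ^ p) * ENNReal.ofReal t) := by
              rw [mul_comm (ENNReal.ofReal (g t ^ p)), ← mul_assoc,
                ENNReal.inv_mul_cancel hoft0 ENNReal.ofReal_ne_top, one_mul]
          _ ≤ (ENNReal.ofReal t)⁻¹ * LIZ.Fp g p t := mul_le_mul_right hFt _
      refine mul_le_mul_right ?_ _
      calc ENNReal.ofReal (g t ^ q)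
          = ENNReal.ofReal (g t ^ p) ^ (q/p) := by
            rw [LIZ.ofReal_rpow_comp (hg0 t ⟨ht0, ht1⟩) hp (div_pos hq hp)]
            congr 1
            field_simp
        _ ≤ ((ENNReal.ofReal t)⁻¹ * LIZ.Fp g p t) ^ (q/p) :=
            ENNReal.rpow_le_rpow h2 (div_pos hq hp).le
    by_cases hS : Slin = ⊤
    · have hB : Blin = ⊤ := eq_top_iff.mpr (hS ▸ heasy)
      rw [hSrepr, hBrepr, hS, hB]
      simp only [ENNReal.toReal_top]
      rw [Real.zero_rpow hq']
      norm_num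
    · have hB : Blin ≠ ⊤ := ne_top_of_le_ne_top (ENNReal.mul_ne_top hK hS) hBle
      constructor
      · rw [hSrepr, hBrepr, one_mul]
        exact Real.rpow_le_rpow ENNReal.toReal_nonneg (ENNReal.toReal_mono hB heasy)
          (by positivity)
      · rw [hSrepr, hBrepr]
        have h1 : Blin.toReal ≤ (max 1 K.toReal) * Slin.toReal := by
          calc Blin.toReal ≤ (K * Slin).toReal :=
                ENNReal.toReal_mono (ENNReal.mul_ne_top hK hS) hBle
            _ = K.toReal * Slin.toReal := ENNReal.toReal_mul
            _ ≤ _ := mul_le_mul_of_nonneg_right (le_max_right _ _) ENNReal.toReal_nonneg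
        calc Blin.toReal ^ (1/q) ≤ ((max 1 K.toReal) * Slin.toReal) ^ (1/q) :=
              Real.rpow_le_rpow ENNReal.toReal_nonneg h1 (by positivity)
          _ = C * Slin.toReal ^ (1/q) := by
              rw [Real.mul_rpow hmax1.le ENNReal.toReal_nonneg]
  · -- inner lintegral is infinite somewhere, hence everywhere
    push_neg at hfin
    obtain ⟨t₀, ht₀, hft₀⟩ := hfin
    have hall : ∀ t ∈ Ioo (0:ℝ) 1, LIZ.Fp g p t = ⊤ := by
      intro t ht
      rcases le_or_gt t₀ t with h | h
      · rw [eq_top_iff, ← hft₀]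
        exact lintegral_mono_set (Ioc_subset_Ioc le_rfl h)
      · by_contra hne
        have hsplit : (∫⁻ u in Ioc (0:ℝ) t₀, ENNReal.ofReal (g u ^ p))
            = (∫⁻ u in Ioc (0:ℝ) t, ENNReal.ofReal (g u ^ p))
              + ∫⁻ u in Ioc t t₀, ENNReal.ofReal (g u ^ p) := by
          rw [← lintegral_union measurableSet_Ioc (Set.Ioc_disjoint_Ioc_of_le le_rfl),
            Set.Ioc_union_Ioc_eq_Ioc ht.1.le h.le]
        have htail : (∫⁻ u in Ioc t t₀, ENNReal.ofReal (g u ^ p)) ≠ ⊤ := by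
          have hbd : ∀ u ∈ Ioc t t₀,
              ENNReal.ofReal (g u ^ p) ≤ ENNReal.ofReal (g t ^ p) := by
            intro u hu
            have hu01 : u ∈ Ioo (0:ℝ) 1 := ⟨lt_trans ht.1 hu.1, lt_of_le_of_lt hu.2 ht₀.2⟩
            exact ENNReal.ofReal_le_ofReal
              (Real.rpow_le_rpow (hg0 u hu01) (hg ht hu01 hu.1.le) hp.le)
          refine ne_top_of_le_ne_top ?_
            ((setLIntegral_mono' measurableSet_Ioc hbd).trans_eq (setLIntegral_const _ _))
          rw [Real.volume_Ioc]
          exact ENNReal.mul_ne_top ENNReal.ofReal_ne_top ENNReal.ofReal_ne_top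
        have hft₀' : (∫⁻ u in Ioc (0:ℝ) t₀, ENNReal.ofReal (g u ^ p)) = ⊤ := hft₀
        rw [hsplit] at hft₀'
        rcases ENNReal.add_eq_top.mp hft₀' with h' | h'
        · exact hne h'
        · exact htail h'
    have hBzero : (∫ t in Ioo (0:ℝ) 1,
        (t ^ (-(1/p)) * (1 - Real.log t) ^ b
          * (∫ u in Ioc (0:ℝ) t, g u ^ p) ^ (1/p)) ^ q / t) = 0 := by
      have hzero : ∀ t ∈ Ioo (0:ℝ) 1,
          (t ^ (-(1/p)) * (1 - Real.log t) ^ b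
            * (∫ u in Ioc (0:ℝ) t, g u ^ p) ^ (1/p)) ^ q / t = 0 := by
        intro t ht
        have hnint : ¬ Integrable (fun u => g u ^ p) (volume.restrict (Ioc (0:ℝ) t)) := by
          intro hint
          have h2 := hint.2
          have hle : LIZ.Fp g p t ≤ ∫⁻ u in Ioc (0:ℝ) t, (‖g u ^ p‖₊ : ℝ≥0∞) :=
            lintegral_mono fun u => Real.ofReal_le_enorm _
          rw [hall t ht] at hle
          exact lt_irrefl _ (lt_of_le_of_lt hle h2)
        rw [integral_undef hnint, Real.zero_rpow (one_div_ne_zero hp.ne'), mul_zero,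
          Real.zero_rpow hq.ne', zero_div]
      calc (∫ t in Ioo (0:ℝ) 1,
          (t ^ (-(1/p)) * (1 - Real.log t) ^ b
            * (∫ u in Ioc (0:ℝ) t, g u ^ p) ^ (1/p)) ^ q / t)
          = ∫ _ in Ioo (0:ℝ) 1, (0:ℝ) :=
            setIntegral_congr_fun measurableSet_Ioo fun t ht => hzero t ht
        _ = 0 := integral_zero _ _
    have hBlin_top : Blin = ⊤ := by
      have hpt : ∀ t ∈ Ioo (0:ℝ) 1,
          LIZ.Lw (b*q) t * ((ENNReal.ofReal t)⁻¹ * LIZ.Fp g p t) ^ (q/p) = ⊤ := by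
        intro t ht
        obtain ⟨ht0, ht1⟩ := ht
        have hl : 0 < 1 - Real.log t := by
          have := Real.log_neg ht0 ht1; linarith
        have h1 : (ENNReal.ofReal t)⁻¹ ≠ 0 := ENNReal.inv_ne_zero.mpr ENNReal.ofReal_ne_top
        have h2 : (ENNReal.ofReal t)⁻¹ * LIZ.Fp g p t = ⊤ := by
          rw [hall t ⟨ht0, ht1⟩, ENNReal.mul_top h1]
        rw [h2, ENNReal.top_rpow_of_pos (div_pos hq hp), ENNReal.mul_top]
        show ENNReal.ofReal ((1 - Real.log t) ^ (b*q)) * (ENNReal.ofReal t)⁻¹ ≠ 0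
        refine mul_ne_zero ?_ h1
        simp only [ne_eq, ENNReal.ofReal_eq_zero, not_le]
        exact Real.rpow_pos_of_pos hl _
      rw [hBlin]
      calc (∫⁻ t in Ioo (0:ℝ) 1,
          LIZ.Lw (b*q) t * ((ENNReal.ofReal t)⁻¹ * LIZ.Fp g p t) ^ (q/p))
          = ∫⁻ _ in Ioo (0:ℝ) 1, (⊤:ℝ≥0∞) :=
            setLIntegral_congr_fun measurableSet_Ioo hpt
        _ = ⊤ := by
          rw [setLIntegral_const, Real.volume_Ioo]
          simp
    have hSlin_top : Slin = ⊤ := by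
      by_contra hne
      rw [hBlin_top] at hBle
      exact (ENNReal.mul_ne_top hK hne) (top_le_iff.mp hBle)
    rw [hSrepr, hBzero, hSlin_top]
    simp only [ENNReal.toReal_top]
    rw [Real.zero_rpow hq']
    norm_num
end

section
/- Let 0 < q < ∞ and let f^* : (0,1) → [0,∞) be decreasing with ∫₀^1 t^{q/2} f^*(t)^q dt/t < ∞. Then lim_{r → ∞} r^{-1/q} (∫₀^1 (t^{1/r} f^*(t))^q dt/t)^{1/q} = q^{-1/q} · lim_{t→0+} f^*(t). -/
open MeasureTheory Set Filter

/-- Limit of normalized Lorentz norms: let `0 < q < ∞` and let `g : (0,1) → [0,∞)`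
be decreasing (playing the role of a decreasing rearrangement `f^*`) with
`∫₀^1 t^{q/2} g(t)^q dt/t < ∞`.  If `g(t) → L` as `t → 0+`, then
`r^{-1/q} (∫₀^1 (t^{1/r} g(t))^q dt/t)^{1/q} → q^{-1/q} L` as `r → ∞`. -/
theorem lorentz_norm_limit (q : ℝ) (hq : 0 < q) (g : ℝ → ℝ)
    (hg : AntitoneOn g (Ioo (0:ℝ) 1)) (hg0 : ∀ t ∈ Ioo (0:ℝ) 1, 0 ≤ g t)
    (hint : IntegrableOn (fun t => t ^ (q/2) * g t ^ q / t) (Ioo (0:ℝ) 1))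
    (L : ℝ) (hL : Tendsto g (nhdsWithin 0 (Ioi 0)) (nhds L)) :
    Tendsto (fun r : ℝ =>
        r ^ (-(1/q)) * (∫ t in Ioo (0:ℝ) 1, (t ^ (1/r) * g t) ^ q / t) ^ (1/q))
      atTop (nhds (q ^ (-(1/q)) * L)) := by
  have hq' : q ≠ 0 := hq.ne'
  -- `L ≥ 0`
  have hL0 : 0 ≤ L := by
    refine ge_of_tendsto hL ?_
    filter_upwards [Ioo_mem_nhdsGT_of_mem
      (show (0:ℝ) ∈ Ico (0:ℝ) 1 by constructor <;> norm_num)] with t ht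
    exact hg0 t ht
  -- `g ≤ L` on `(0,1)`
  have hgL : ∀ t ∈ Ioo (0:ℝ) 1, g t ≤ L := by
    intro t ht
    refine ge_of_tendsto hL ?_
    filter_upwards [Ioo_mem_nhdsGT_of_mem
      (show (0:ℝ) ∈ Ico (0:ℝ) t from ⟨le_refl 0, ht.1⟩)] with s hs
    exact hg ⟨hs.1, hs.2.trans ht.2⟩ ht hs.2.le
  set J : ℝ → ℝ := fun r => ∫ x in Ioo (0:ℝ) 1, g (x ^ (r/q)) ^ q with hJdef
  -- membership transfer
  have hmap : ∀ {p x : ℝ}, 0 < p → x ∈ Ioo (0:ℝ) 1 → x ^ p ∈ Ioo (0:ℝ) 1 := by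
    intro p x hp hx
    exact ⟨Real.rpow_pos_of_pos hx.1 _, Real.rpow_lt_one hx.1.le hx.2 hp⟩
  -- Dominated convergence : `J r → L ^ q`
  have hJlim : Tendsto J atTop (nhds (L ^ q)) := by
    have h1 : (L:ℝ) ^ q = ∫ x in Ioo (0:ℝ) 1, L ^ q := by
      rw [setIntegral_const]
      simp [Real.volume_Ioo]
    rw [h1, hJdef]
    refine tendsto_integral_filter_of_dominated_convergence (fun _ => L ^ q) ?_ ?_ ?_ ?_
    · filter_upwards [eventually_gt_atTop (0:ℝ)] with r hr
      have hp : 0 < r / q := div_pos hr hq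
      have hanti : AntitoneOn (fun x => g (x ^ (r/q))) (Ioo (0:ℝ) 1) := by
        intro x hx y hy hxy
        exact hg (hmap hp hx) (hmap hp hy) (Real.rpow_le_rpow hx.1.le hxy hp.le)
      exact ((Real.continuous_rpow_const hq.le).measurable.comp_aemeasurable
        (aemeasurable_restrict_of_antitoneOn measurableSet_Ioo hanti)).aestronglyMeasurable
    · filter_upwards [eventually_gt_atTop (0:ℝ)] with r hr
      have hp : 0 < r / q := div_pos hr hq
      refine (ae_restrict_mem measurableSet_Ioo).mono ?_
      intro x hx
      have hxp := hmap hp hx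
      rw [Real.norm_of_nonneg (Real.rpow_nonneg (hg0 _ hxp) q)]
      exact Real.rpow_le_rpow (hg0 _ hxp) (hgL _ hxp) hq.le
    · exact (integrableOn_const_iff (C := L ^ q)).mpr (Or.inr (by simp [Real.volume_Ioo]))
    · refine (ae_restrict_mem measurableSet_Ioo).mono ?_
      intro x hx
      have hx1 : Tendsto (fun r : ℝ => x ^ (r / q)) atTop (nhds 0) :=
        (tendsto_rpow_atTop_of_base_lt_one x (by linarith [hx.1]) hx.2).comp
          (Tendsto.atTop_div_const hq tendsto_id)
      have hx2 : Tendsto (fun r : ℝ => x ^ (r / q)) atTop (nhdsWithin 0 (Ioi 0)) :=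
        tendsto_nhdsWithin_of_tendsto_nhds_of_eventually_within _ hx1
          (Eventually.of_forall fun r => Real.rpow_pos_of_pos hx.1 _)
      exact ((Real.continuousAt_rpow_const L q (Or.inr hq.le)).tendsto).comp (hL.comp hx2)
  -- Key algebraic identity for `r > 0`
  have key : ∀ r : ℝ, 0 < r →
      r ^ (-(1/q)) * (∫ t in Ioo (0:ℝ) 1, (t ^ (1/r) * g t) ^ q / t) ^ (1/q)
        = (J r / q) ^ (1/q) := by
    intro r hr
    set p := r / q with hpdef
    have hp : 0 < p := div_pos hr hq
    have hIp : (∫ t in Ioo (0:ℝ) 1, (t ^ (1/r) * g t) ^ q / t) = p * J r := by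
      have e1 : (∫ t in Ioo (0:ℝ) 1, (t ^ (1/r) * g t) ^ q / t)
          = ∫ t in Ioo (0:ℝ) 1, t ^ (q/r - 1) * g t ^ q := by
        refine setIntegral_congr_fun measurableSet_Ioo ?_
        intro t ht
        dsimp only
        have h1 : (t ^ (1/r) * g t) ^ q = t ^ (q/r) * g t ^ q := by
          rw [Real.mul_rpow (Real.rpow_nonneg ht.1.le _) (hg0 t ht),
            ← Real.rpow_mul ht.1.le]
          ring_nf
        rw [h1, Real.rpow_sub ht.1, Real.rpow_one]
        ring
      set f : ℝ → ℝ := (Ioo (0:ℝ) 1).indicator (fun t => t ^ (q/r - 1) * g t ^ q) with hfdef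
      have e2 : (∫ t in Ioo (0:ℝ) 1, t ^ (q/r - 1) * g t ^ q) = ∫ y in Ioi (0:ℝ), f y := by
        rw [hfdef, integral_indicator measurableSet_Ioo,
          Measure.restrict_restrict measurableSet_Ioo,
          inter_eq_left.mpr Ioo_subset_Ioi_self]
      have e3 := integral_comp_rpow_Ioi (E := ℝ) f (p := p) hp.ne'
      have e4 : (∫ x in Ioi (0:ℝ), (|p| * x ^ (p - 1)) • f (x ^ p))
          = ∫ x in Ioi (0:ℝ), p * (Ioo (0:ℝ) 1).indicator (fun x => g (x ^ p) ^ q) x := by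
        refine setIntegral_congr_fun measurableSet_Ioi ?_
        intro x hx
        have hx0 : (0:ℝ) < x := hx
        by_cases hmem : x ∈ Ioo (0:ℝ) 1
        · have hxp : x ^ p ∈ Ioo (0:ℝ) 1 := hmap hp hmem
          rw [hfdef]
          simp only [indicator_of_mem hxp, indicator_of_mem hmem, smul_eq_mul]
          have hexp : (x ^ p) ^ (q/r - 1) = x ^ (1 - p) := by
            rw [← Real.rpow_mul hx0.le]
            congr 1
            field_simp [hpdef]
            have hpq : p * q = r := by rw [hpdef]; field_simp
            linarith
          rw [hexp, abs_of_pos hp]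
          have : x ^ (p - 1) * x ^ (1 - p) = 1 := by
            rw [← Real.rpow_add hx0]
            norm_num
          calc p * x ^ (p - 1) * (x ^ (1 - p) * g (x ^ p) ^ q)
              = p * (x ^ (p - 1) * x ^ (1 - p)) * g (x ^ p) ^ q := by ring
            _ = p * g (x ^ p) ^ q := by rw [this]; ring
        · have hx1 : (1:ℝ) ≤ x := by
            by_contra hc
            exact hmem ⟨hx0, not_le.mp hc⟩
          have hxp : x ^ p ∉ Ioo (0:ℝ) 1 := by
            intro hc
            exact absurd hc.2 (not_lt.mpr (Real.one_le_rpow hx1 hp.le))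
          rw [hfdef]
          simp [indicator_of_notMem hxp, indicator_of_notMem hmem]
      have e5 : (∫ x in Ioi (0:ℝ), p * (Ioo (0:ℝ) 1).indicator (fun x => g (x ^ p) ^ q) x)
          = p * J r := by
        rw [integral_const_mul, integral_indicator measurableSet_Ioo,
          Measure.restrict_restrict measurableSet_Ioo,
          inter_eq_left.mpr Ioo_subset_Ioi_self, hJdef]
      rw [e1, e2, ← e3, e4, e5]
    have hJnn : 0 ≤ J r := by
      rw [hJdef]
      refine setIntegral_nonneg measurableSet_Ioo ?_
      intro x hx
      exact Real.rpow_nonneg (hg0 _ (hmap hp hx)) q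
    rw [hIp, Real.mul_rpow hp.le hJnn]
    have hrq : r ^ (-(1/q)) * p ^ (1/q) = q ^ (-(1/q)) := by
      rw [Real.rpow_neg hr.le, Real.rpow_neg hq.le, hpdef,
        Real.div_rpow hr.le hq.le]
      have h1 : (0:ℝ) < r ^ (1/q) := Real.rpow_pos_of_pos hr _
      have h2 : (0:ℝ) < q ^ (1/q) := Real.rpow_pos_of_pos hq _
      field_simp
    have hdiv : (J r / q) ^ (1/q) = J r ^ (1/q) * q ^ (-(1/q)) := by
      rw [Real.div_rpow hJnn hq.le, Real.rpow_neg hq.le, div_eq_mul_inv]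
    rw [hdiv, ← hrq]
    ring
  -- assemble
  have htend : Tendsto (fun r => (J r / q) ^ (1/q)) atTop (nhds ((L ^ q / q) ^ (1/q))) :=
    ((Real.continuousAt_rpow_const _ _ (Or.inr (by positivity))).tendsto).comp
      (hJlim.div_const q)
  have hval : (L ^ q / q) ^ (1/q) = q ^ (-(1/q)) * L := by
    rw [Real.div_rpow (Real.rpow_nonneg hL0 q) hq.le, ← Real.rpow_mul hL0,
      mul_one_div_cancel hq', Real.rpow_one, Real.rpow_neg hq.le]
    ring
  refine Tendsto.congr' ?_ (hval ▸ htend)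
  filter_upwards [eventually_gt_atTop (0:ℝ)] with r hr using (key r hr).symm
end

section
/- Let 1 < r < ∞, 0 < q < 1, and let g : (0,1) → [0,∞) be decreasing. Then ∫₀^1 (t^{1/r} g^{**}(t))^q dt/t ≤ C (1 - 1/r)^{-1} ∫₀^1 (t^{1/r} g(t))^q dt/t, where g^{**}(t) = (1/t)∫₀^t g(u) du and C depends only on q. -/
open MeasureTheory Set

open ENNReal Function

set_option maxHeartbeats 1000000

lemma aux_pow_le {i j : ℕ} (h : i ≤ j) : (2:ℝ) ^ i ≤ 2 ^ j :=
  pow_le_pow_right₀ (by norm_num) h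

lemma aux_div_anti {t : ℝ} (ht : 0 < t) {i j : ℕ} (h : i ≤ j) : t / 2 ^ j ≤ t / 2 ^ i :=
  div_le_div_of_nonneg_left ht.le (by positivity) (aux_pow_le h)

lemma aux_tsum_rpow {q : ℝ} (hq0 : 0 < q) (hq1 : q ≤ 1) (a : ℕ → ℝ≥0∞) :
    (∑' k, a k) ^ q ≤ ∑' k, a k ^ q := by
  have hfin : ∀ s : Finset ℕ, (∑ k ∈ s, a k) ^ q ≤ ∑ k ∈ s, a k ^ q := by
    intro s
    induction s using Finset.cons_induction with
    | empty => simp [ENNReal.zero_rpow_of_pos hq0]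
    | cons i s hi ih =>
      rw [Finset.sum_cons, Finset.sum_cons]
      exact le_trans (ENNReal.rpow_add_le_add_rpow _ _ hq0.le hq1)
        (add_le_add le_rfl ih)
  have hb : ∀ s : Finset ℕ, (∑ k ∈ s, a k) ≤ (∑' k, a k ^ q) ^ (1/q) := by
    intro s
    have h1 : (∑ k ∈ s, a k) ^ q ≤ ∑' k, a k ^ q :=
      le_trans (hfin s) (ENNReal.sum_le_tsum s)
    have := ENNReal.rpow_le_rpow h1 (by positivity : (0:ℝ) ≤ 1/q)
    rwa [← ENNReal.rpow_mul, mul_one_div, div_self hq0.ne', ENNReal.rpow_one] at this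
  have htsum : (∑' k, a k) ≤ (∑' k, a k ^ q) ^ (1/q) := by
    rw [ENNReal.tsum_eq_iSup_sum]
    exact iSup_le hb
  calc (∑' k, a k) ^ q ≤ ((∑' k, a k ^ q) ^ (1/q)) ^ q :=
        ENNReal.rpow_le_rpow htsum hq0.le
    _ = ∑' k, a k ^ q := by
        rw [← ENNReal.rpow_mul, one_div, inv_mul_cancel₀ hq0.ne', ENNReal.rpow_one]

lemma aux_dyadic_union {t : ℝ} (ht : 0 < t) :
    (⋃ k : ℕ, Ioc (t / 2 ^ (k+1)) (t / 2 ^ k)) = Ioc 0 t := by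
  ext u
  simp only [mem_iUnion, mem_Ioc]
  constructor
  · rintro ⟨k, h1, h2⟩
    refine ⟨lt_of_le_of_lt (by positivity) h1, h2.trans ?_⟩
    simpa using aux_div_anti ht (Nat.zero_le k)
  · rintro ⟨hu0, hut⟩
    have hP : ∃ k : ℕ, t / 2 ^ (k+1) < u := by
      obtain ⟨n, hn⟩ := pow_unbounded_of_one_lt (t/u) (one_lt_two (α := ℝ))
      refine ⟨n, ?_⟩
      rw [div_lt_iff₀ (by positivity)]
      rw [div_lt_iff₀ hu0] at hn
      calc t < 2 ^ n * u := hn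
        _ ≤ u * 2 ^ (n+1) := by
            rw [mul_comm]
            exact mul_le_mul_of_nonneg_left (aux_pow_le (by omega)) hu0.le
    refine ⟨Nat.find hP, Nat.find_spec hP, ?_⟩
    rcases Nat.eq_zero_or_eq_succ_pred (Nat.find hP) with h0 | hsucc
    · rw [h0]; simpa using hut
    · rw [hsucc]
      have := Nat.find_min hP (Nat.sub_lt (by omega) one_pos)
      push_neg at this
      simpa using this

lemma aux_dyadic_disj {t : ℝ} (ht : 0 < t) :
    Pairwise (Function.onFun Disjoint fun k : ℕ => Ioc (t / 2 ^ (k+1)) (t / 2 ^ k)) := by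
  have key : ∀ i j : ℕ, i < j →
      Disjoint (Ioc (t / 2 ^ (i+1)) (t / 2 ^ i)) (Ioc (t / 2 ^ (j+1)) (t / 2 ^ j)) := by
    intro i j hij
    rw [Set.disjoint_left]
    rintro u ⟨h1, _⟩ ⟨_, h4⟩
    exact absurd (h4.trans (aux_div_anti ht (by omega))) (not_le.2 h1)
  intro i j hij
  rcases hij.lt_or_gt with h | h
  · exact key i j h
  · exact (key j i h).symm

lemma aux_lemmaA {q : ℝ} (hq0 : 0 < q) (hq1 : q < 1) {g : ℝ → ℝ}
    (hg : AntitoneOn g (Ioo (0:ℝ) 1)) (hg0 : ∀ t ∈ Ioo (0:ℝ) 1, 0 ≤ g t)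
    {t : ℝ} (ht : t ∈ Ioo (0:ℝ) 1) :
    ENNReal.ofReal ((∫ u in Ioc (0:ℝ) t, g u) ^ q)
      ≤ 2 * ∫⁻ u in Ioc (0:ℝ) t, ENNReal.ofReal (u ^ (q-1) * g u ^ q) := by
  obtain ⟨ht0, ht1⟩ := ht
  set J : ℕ → Set ℝ := fun k => Ioc (t / 2 ^ (k+1)) (t / 2 ^ k) with hJ
  have hJm : ∀ k, MeasurableSet (J k) := fun k => measurableSet_Ioc
  have hsub : Ioc (0:ℝ) t ⊆ Ioo 0 1 := fun u hu => ⟨hu.1, lt_of_le_of_lt hu.2 ht1⟩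
  have haI : ∀ k : ℕ, t / 2 ^ (k+1) ∈ Ioo (0:ℝ) 1 := by
    intro k
    refine ⟨by positivity, lt_of_le_of_lt ?_ ht1⟩
    simpa using aux_div_anti ht0 (Nat.zero_le (k+1))
  have hJsub : ∀ k, J k ⊆ Ioo (0:ℝ) 1 := by
    intro k u hu
    refine ⟨lt_of_le_of_lt (by positivity) hu.1, lt_of_le_of_lt (hu.2.trans ?_) ht1⟩
    simpa using aux_div_anti ht0 (Nat.zero_le k)
  -- step 1
  have step1 : ENNReal.ofReal (∫ u in Ioc (0:ℝ) t, g u)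
      ≤ ∫⁻ u in Ioc (0:ℝ) t, ENNReal.ofReal (g u) := by
    by_cases hgi : IntegrableOn g (Ioc (0:ℝ) t) volume
    · rw [ofReal_integral_eq_lintegral_ofReal hgi
        ((ae_restrict_iff' measurableSet_Ioc).2 (Filter.Eventually.of_forall
          fun u hu => hg0 u (hsub hu)))]
    · rw [integral_undef hgi]; simp
  -- step 2
  have step2 : ∫⁻ u in Ioc (0:ℝ) t, ENNReal.ofReal (g u)
      = ∑' k, ∫⁻ u in J k, ENNReal.ofReal (g u) := by
    rw [← aux_dyadic_union ht0, lintegral_iUnion hJm (aux_dyadic_disj ht0)]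
  -- step 3
  have step3 : ∀ k : ℕ, ∫⁻ u in J k, ENNReal.ofReal (g u)
      ≤ ENNReal.ofReal (t / 2 ^ (k+1) * g (t / 2 ^ (k+1))) := by
    intro k
    set a := t / 2 ^ (k+1) with ha
    have hbound : ∫⁻ u in J k, ENNReal.ofReal (g u)
        ≤ ∫⁻ _u in J k, ENNReal.ofReal (g a) :=
      lintegral_mono_ae ((ae_restrict_iff' (hJm k)).2 (Filter.Eventually.of_forall
        fun u hu => ENNReal.ofReal_le_ofReal (hg (haI k) (hJsub k hu) hu.1.le)))
    refine hbound.trans ?_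
    rw [setLIntegral_const, Real.volume_Ioc]
    have hlen : t / 2 ^ k - t / 2 ^ (k+1) = a := by
      rw [ha]; field_simp; ring
    rw [hlen, ← ENNReal.ofReal_mul (hg0 a (haI k)), mul_comm]
  -- step 4
  have hGnn : 0 ≤ ∫ u in Ioc (0:ℝ) t, g u :=
    setIntegral_nonneg measurableSet_Ioc fun u hu => hg0 u (hsub hu)
  have step4 : ENNReal.ofReal ((∫ u in Ioc (0:ℝ) t, g u) ^ q)
      ≤ ∑' k : ℕ, ENNReal.ofReal ((t / 2 ^ (k+1) * g (t / 2 ^ (k+1))) ^ q) := by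
    rw [← ENNReal.ofReal_rpow_of_nonneg hGnn hq0.le]
    have h1 : ENNReal.ofReal (∫ u in Ioc (0:ℝ) t, g u)
        ≤ ∑' k : ℕ, ENNReal.ofReal (t / 2 ^ (k+1) * g (t / 2 ^ (k+1))) :=
      step1.trans (step2 ▸ ENNReal.tsum_le_tsum step3)
    calc ENNReal.ofReal (∫ u in Ioc (0:ℝ) t, g u) ^ q
        ≤ (∑' k : ℕ, ENNReal.ofReal (t / 2 ^ (k+1) * g (t / 2 ^ (k+1)))) ^ q :=
          ENNReal.rpow_le_rpow h1 hq0.le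
      _ ≤ ∑' k : ℕ, ENNReal.ofReal (t / 2 ^ (k+1) * g (t / 2 ^ (k+1))) ^ q :=
          aux_tsum_rpow hq0 hq1.le _
      _ = ∑' k : ℕ, ENNReal.ofReal ((t / 2 ^ (k+1) * g (t / 2 ^ (k+1))) ^ q) := by
          refine tsum_congr fun k => ?_
          exact ENNReal.ofReal_rpow_of_nonneg
            (mul_nonneg (by positivity) (hg0 _ (haI k))) hq0.le
  -- step 5
  have step5 : ∀ k : ℕ, ENNReal.ofReal ((t / 2 ^ (k+1) * g (t / 2 ^ (k+1))) ^ q)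
      ≤ 2 * ∫⁻ u in J (k+1), ENNReal.ofReal (u ^ (q-1) * g u ^ q) := by
    intro k
    set a := t / 2 ^ (k+1) with ha
    have ha0 : 0 < a := (haI k).1
    have hagnn : 0 ≤ g a := hg0 a (haI k)
    have hlow : ∫⁻ _u in J (k+1), ENNReal.ofReal (a ^ (q-1) * g a ^ q)
        ≤ ∫⁻ u in J (k+1), ENNReal.ofReal (u ^ (q-1) * g u ^ q) := by
      refine lintegral_mono_ae ((ae_restrict_iff' (hJm (k+1))).2
        (Filter.Eventually.of_forall fun u hu => ENNReal.ofReal_le_ofReal ?_))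
      have hu0 : 0 < u := lt_of_le_of_lt (by positivity) hu.1
      have hua : u ≤ a := hu.2
      have h1 : a ^ (q-1) ≤ u ^ (q-1) :=
        Real.rpow_le_rpow_of_nonpos hu0 hua (by linarith)
      have h2 : g a ^ q ≤ g u ^ q :=
        Real.rpow_le_rpow hagnn (hg (hJsub (k+1) hu) (haI k) hua) hq0.le
      exact mul_le_mul h1 h2 (Real.rpow_nonneg hagnn q) (Real.rpow_nonneg hu0.le _)
    have hvol : ∫⁻ _u in J (k+1), ENNReal.ofReal (a ^ (q-1) * g a ^ q)
        = ENNReal.ofReal (a ^ (q-1) * g a ^ q * (a / 2)) := by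
      rw [setLIntegral_const, Real.volume_Ioc]
      have hlen : t / 2 ^ (k+1) - t / 2 ^ (k+1+1) = a / 2 := by
        rw [ha]; field_simp; ring
      rw [hlen, ← ENNReal.ofReal_mul (by positivity)]
    have hkey : (a * g a) ^ q = 2 * (a ^ (q-1) * g a ^ q * (a / 2)) := by
      rw [Real.mul_rpow ha0.le hagnn]
      have h2 : a ^ q = a ^ (q-1) * a := by
        rw [← Real.rpow_add_one ha0.ne' (q-1)]
        norm_num
      rw [h2]; ring
    rw [hkey, ENNReal.ofReal_mul zero_le_two, ENNReal.ofReal_ofNat]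
    exact mul_le_mul_right (hvol.symm.trans_le hlow) 2
  -- step 6
  have step6 : (∑' k : ℕ, ∫⁻ u in J (k+1), ENNReal.ofReal (u ^ (q-1) * g u ^ q))
      ≤ ∫⁻ u in Ioc (0:ℝ) t, ENNReal.ofReal (u ^ (q-1) * g u ^ q) := by
    rw [← aux_dyadic_union ht0, lintegral_iUnion hJm (aux_dyadic_disj ht0)]
    exact ENNReal.tsum_comp_le_tsum_of_injective (add_left_injective 1)
      (fun k => ∫⁻ u in J k, ENNReal.ofReal (u ^ (q-1) * g u ^ q))
  calc ENNReal.ofReal ((∫ u in Ioc (0:ℝ) t, g u) ^ q)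
      ≤ ∑' k : ℕ, ENNReal.ofReal ((t / 2 ^ (k+1) * g (t / 2 ^ (k+1))) ^ q) := step4
    _ ≤ ∑' k : ℕ, 2 * ∫⁻ u in J (k+1), ENNReal.ofReal (u ^ (q-1) * g u ^ q) :=
        ENNReal.tsum_le_tsum step5
    _ = 2 * ∑' k : ℕ, ∫⁻ u in J (k+1), ENNReal.ofReal (u ^ (q-1) * g u ^ q) :=
        ENNReal.tsum_mul_left
    _ ≤ 2 * ∫⁻ u in Ioc (0:ℝ) t, ENNReal.ofReal (u ^ (q-1) * g u ^ q) :=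
        mul_le_mul_right step6 2

lemma aux_psi_eq {t Gv : ℝ} (ht0 : 0 < t) (hG : 0 ≤ Gv) (q r : ℝ) :
    (t ^ (1/r) * ((1/t) * Gv)) ^ q / t = t ^ (q/r - q - 1) * Gv ^ q := by
  rw [Real.mul_rpow (Real.rpow_nonneg ht0.le _) (mul_nonneg (by positivity) hG),
    Real.mul_rpow (by positivity) hG, ← Real.rpow_mul ht0.le,
    one_div t, Real.inv_rpow ht0.le, ← Real.rpow_neg ht0.le]
  have key : t ^ (1/r * q) * t ^ (-q) * t ^ (-1:ℝ) = t ^ (q/r - q - 1) := by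
    rw [← Real.rpow_add ht0, ← Real.rpow_add ht0]
    congr 1; ring
  calc t ^ (1/r * q) * (t ^ (-q) * Gv ^ q) / t
      = t ^ (1/r * q) * t ^ (-q) * t ^ (-1:ℝ) * Gv ^ q := by
        rw [Real.rpow_neg_one]; ring
    _ = t ^ (q/r - q - 1) * Gv ^ q := by rw [key]

lemma aux_phi_eq {t gt : ℝ} (ht0 : 0 < t) (hgt : 0 ≤ gt) (q r : ℝ) :
    (t ^ (1/r) * gt) ^ q / t = t ^ (q/r - 1) * gt ^ q := by
  rw [Real.mul_rpow (Real.rpow_nonneg ht0.le _) hgt, ← Real.rpow_mul ht0.le]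
  have key : t ^ (1/r * q) * t ^ (-1:ℝ) = t ^ (q/r - 1) := by
    rw [← Real.rpow_add ht0]
    congr 1; ring
  calc t ^ (1/r * q) * gt ^ q / t
      = t ^ (1/r * q) * t ^ (-1:ℝ) * gt ^ q := by rw [Real.rpow_neg_one]; ring
    _ = t ^ (q/r - 1) * gt ^ q := by rw [key]

lemma aux_inner {u α : ℝ} (hu : u ∈ Ioo (0:ℝ) 1) (hα : α < 0) :
    ∫⁻ t in Ico u 1, ENNReal.ofReal (t ^ (α-1)) ≤ ENNReal.ofReal ((-α)⁻¹ * u ^ α) := by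
  obtain ⟨hu0, hu1⟩ := hu
  have hIoc : IntegrableOn (fun t : ℝ => t ^ (α-1)) (Ioc u 1) volume := by
    have := (intervalIntegral.intervalIntegrable_rpow (μ := volume) (r := α - 1) (a := u) (b := 1)
      (Or.inr (fun h => absurd h.1 (not_le.2 (lt_min hu0 one_pos))))).1
    exact this
  have hIco : IntegrableOn (fun t : ℝ => t ^ (α-1)) (Ico u 1) volume := by
    rw [IntegrableOn, Measure.restrict_congr_set Ico_ae_eq_Ioc]
    exact hIoc
  have hnn : 0 ≤ᵐ[volume.restrict (Ico u 1)] fun t : ℝ => t ^ (α-1) :=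
    (ae_restrict_iff' measurableSet_Ico).2 (Filter.Eventually.of_forall
      fun t ht => Real.rpow_nonneg (le_trans hu0.le ht.1) _)
  rw [← ofReal_integral_eq_lintegral_ofReal hIco hnn]
  have hval : (∫ t in Ico u 1, t ^ (α-1)) = (1 - u ^ α) / α := by
    rw [setIntegral_congr_set Ico_ae_eq_Ioc,
      ← intervalIntegral.integral_of_le hu1.le,
      integral_rpow (Or.inr ⟨by intro h; exact hα.ne (by linarith),
        fun h => absurd h.1 (not_le.2 (lt_min hu0 one_pos))⟩)]
    rw [show α - 1 + 1 = α by ring, Real.one_rpow]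
  rw [hval]
  refine ENNReal.ofReal_le_ofReal ?_
  have hxnn : 0 ≤ u ^ α := Real.rpow_nonneg hu0.le α
  have h1 : (1 - u ^ α) / α = (u ^ α - 1) * (-α)⁻¹ := by
    rw [← div_eq_mul_inv, div_neg, ← neg_div, neg_sub]
  rw [h1, mul_comm ((-α)⁻¹) (u ^ α)]
  exact mul_le_mul_of_nonneg_right (by linarith) (inv_nonneg.2 (by linarith))

lemma aux_main {q r : ℝ} (hq0 : 0 < q) (hq1 : q < 1) (hr : 1 < r) {g : ℝ → ℝ}
    (hg : AntitoneOn g (Ioo (0:ℝ) 1)) (hg0 : ∀ t ∈ Ioo (0:ℝ) 1, 0 ≤ g t) :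
    (∫⁻ t in Ioo (0:ℝ) 1,
        ENNReal.ofReal ((t ^ (1/r) * ((1/t) * ∫ u in Ioc (0:ℝ) t, g u)) ^ q / t))
      ≤ ENNReal.ofReal (2/q * (1 - 1/r)⁻¹) *
        ∫⁻ t in Ioo (0:ℝ) 1, ENNReal.ofReal ((t ^ (1/r) * g t) ^ q / t) := by
  have hr0 : (0:ℝ) < r := lt_trans one_pos hr
  have hα0 : q/r - q < 0 := by
    have : q/r < q := by
      rw [div_lt_iff₀ hr0]
      nlinarith
    linarith
  set W : ℝ → ℝ≥0∞ := fun t => ENNReal.ofReal (t ^ (q/r - q - 1)) with hW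
  set V : ℝ → ℝ≥0∞ := fun u => ENNReal.ofReal (u ^ (q-1) * g u ^ q) with hV
  have hWm : Measurable W := ENNReal.measurable_ofReal.comp
    (measurable_id.pow measurable_const)
  have hgae : AEMeasurable g (volume.restrict (Ioo (0:ℝ) 1)) :=
    aemeasurable_restrict_of_antitoneOn measurableSet_Ioo hg
  have hVae : AEMeasurable V (volume.restrict (Ioo (0:ℝ) 1)) :=
    ENNReal.measurable_ofReal.comp_aemeasurable
      (((measurable_id.pow measurable_const).aemeasurable).mul
        (hgae.pow aemeasurable_const))
  have hGnn : ∀ t ∈ Ioo (0:ℝ) 1, 0 ≤ ∫ u in Ioc (0:ℝ) t, g u := fun t ht =>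
    setIntegral_nonneg measurableSet_Ioc fun u hu =>
      hg0 u ⟨hu.1, lt_of_le_of_lt hu.2 ht.2⟩
  -- rewrite LHS
  have stepA : (∫⁻ t in Ioo (0:ℝ) 1,
      ENNReal.ofReal ((t ^ (1/r) * ((1/t) * ∫ u in Ioc (0:ℝ) t, g u)) ^ q / t))
      = ∫⁻ t in Ioo (0:ℝ) 1,
          W t * ENNReal.ofReal ((∫ u in Ioc (0:ℝ) t, g u) ^ q) := by
    refine setLIntegral_congr_fun measurableSet_Ioo (fun t ht => ?_)
    rw [aux_psi_eq ht.1 (hGnn t ht) q r,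
      ENNReal.ofReal_mul (Real.rpow_nonneg ht.1.le _)]
  have step1 : (∫⁻ t in Ioo (0:ℝ) 1,
      W t * ENNReal.ofReal ((∫ u in Ioc (0:ℝ) t, g u) ^ q))
      ≤ ∫⁻ t in Ioo (0:ℝ) 1, 2 * (W t * ∫⁻ u in Ioc (0:ℝ) t, V u) := by
    refine lintegral_mono_ae ((ae_restrict_iff' measurableSet_Ioo).2
      (Filter.Eventually.of_forall fun t ht => ?_))
    calc W t * ENNReal.ofReal ((∫ u in Ioc (0:ℝ) t, g u) ^ q)
        ≤ W t * (2 * ∫⁻ u in Ioc (0:ℝ) t, V u) :=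
          mul_le_mul_right (aux_lemmaA hq0 hq1 hg hg0 ht) (W t)
      _ = 2 * (W t * ∫⁻ u in Ioc (0:ℝ) t, V u) := by ring
  have step2 : (∫⁻ t in Ioo (0:ℝ) 1, 2 * (W t * ∫⁻ u in Ioc (0:ℝ) t, V u))
      = 2 * ∫⁻ t in Ioo (0:ℝ) 1, W t * ∫⁻ u in Ioc (0:ℝ) t, V u :=
    lintegral_const_mul' 2 _ (by norm_num)
  -- Tonelli
  set S : Set (ℝ × ℝ) := {p : ℝ × ℝ | p.2 ≤ p.1} with hS
  have hSm : MeasurableSet S := measurableSet_le measurable_snd measurable_fst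
  set F : ℝ → ℝ → ℝ≥0∞ := fun t u => W t * (V u * S.indicator 1 (t, u)) with hF
  have hFae : AEMeasurable (uncurry F)
      ((volume.restrict (Ioo (0:ℝ) 1)).prod (volume.restrict (Ioo (0:ℝ) 1))) := by
    have : uncurry F = fun p : ℝ × ℝ => W p.1 * (V p.2 * S.indicator 1 p) := rfl
    rw [this]
    exact ((hWm.comp measurable_fst).aemeasurable).mul
      (hVae.comp_snd.mul ((measurable_one.indicator hSm).aemeasurable))
  have hleft : ∀ t ∈ Ioo (0:ℝ) 1,
      W t * ∫⁻ u in Ioc (0:ℝ) t, V u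
        = ∫⁻ u in Ioo (0:ℝ) 1, F t u := by
    intro t ht
    have hfun : (fun u => V u * S.indicator 1 (t, u)) = (Iic t).indicator V := by
      funext u
      by_cases h : u ≤ t
      · simp [hS, Set.indicator_apply, h]
      · simp [hS, Set.indicator_apply, h]
    have hset : Iic t ∩ Ioo (0:ℝ) 1 = Ioc (0:ℝ) t := by
      ext u
      exact ⟨fun ⟨h1, h2, _⟩ => ⟨h2, h1⟩,
        fun ⟨h1, h2⟩ => ⟨h2, h1, lt_of_le_of_lt h2 ht.2⟩⟩
    rw [hF]
    simp only
    rw [lintegral_const_mul' _ _ ENNReal.ofReal_ne_top, hfun,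
      lintegral_indicator measurableSet_Iic,
      Measure.restrict_restrict measurableSet_Iic, hset]
  have hright : ∀ u ∈ Ioo (0:ℝ) 1,
      (∫⁻ t in Ioo (0:ℝ) 1, F t u)
        = V u * ∫⁻ t in Ico u 1, W t := by
    intro u hu
    have hfun : (fun t => F t u) = fun t => V u * (Ici u).indicator W t := by
      funext t
      by_cases h : u ≤ t
      · simp [hF, hS, Set.indicator_apply, h, mul_comm, mul_left_comm]
      · simp [hF, hS, Set.indicator_apply, h]
    have hset : Ici u ∩ Ioo (0:ℝ) 1 = Ico u 1 := by
      ext t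
      exact ⟨fun ⟨h1, _, h3⟩ => ⟨h1, h3⟩,
        fun ⟨h1, h2⟩ => ⟨h1, lt_of_lt_of_le hu.1 h1, h2⟩⟩
    rw [hfun, lintegral_const_mul' _ _ ENNReal.ofReal_ne_top,
      lintegral_indicator measurableSet_Ici,
      Measure.restrict_restrict measurableSet_Ici, hset]
  have stepT : (∫⁻ t in Ioo (0:ℝ) 1, W t * ∫⁻ u in Ioc (0:ℝ) t, V u)
      = ∫⁻ u in Ioo (0:ℝ) 1, V u * ∫⁻ t in Ico u 1, W t := by
    calc (∫⁻ t in Ioo (0:ℝ) 1, W t * ∫⁻ u in Ioc (0:ℝ) t, V u)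
        = ∫⁻ t in Ioo (0:ℝ) 1, ∫⁻ u in Ioo (0:ℝ) 1, F t u :=
          setLIntegral_congr_fun measurableSet_Ioo
            (fun t ht => hleft t ht)
      _ = ∫⁻ u in Ioo (0:ℝ) 1, ∫⁻ t in Ioo (0:ℝ) 1, F t u :=
          lintegral_lintegral_swap hFae
      _ = ∫⁻ u in Ioo (0:ℝ) 1, V u * ∫⁻ t in Ico u 1, W t :=
          setLIntegral_congr_fun measurableSet_Ioo
            (fun u hu => hright u hu)
  have step4 : (∫⁻ u in Ioo (0:ℝ) 1, V u * ∫⁻ t in Ico u 1, W t)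
      ≤ ∫⁻ u in Ioo (0:ℝ) 1,
          ENNReal.ofReal ((-(q/r - q))⁻¹) *
            ENNReal.ofReal (u ^ (q/r - 1) * g u ^ q) := by
    refine lintegral_mono_ae ((ae_restrict_iff' measurableSet_Ioo).2
      (Filter.Eventually.of_forall fun u hu => ?_))
    have hinner : (∫⁻ t in Ico u 1, W t)
        ≤ ENNReal.ofReal ((-(q/r - q))⁻¹ * u ^ (q/r - q)) := aux_inner hu hα0
    calc V u * ∫⁻ t in Ico u 1, W t
        ≤ V u * ENNReal.ofReal ((-(q/r - q))⁻¹ * u ^ (q/r - q)) :=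
          mul_le_mul_right hinner (V u)
      _ = ENNReal.ofReal ((-(q/r - q))⁻¹) *
            ENNReal.ofReal (u ^ (q/r - 1) * g u ^ q) := by
          rw [hV]
          simp only
          rw [← ENNReal.ofReal_mul
            (mul_nonneg (Real.rpow_nonneg hu.1.le _) (Real.rpow_nonneg (hg0 u hu) _))]
          rw [← ENNReal.ofReal_mul (inv_nonneg.2 (le_of_lt (by linarith)))]
          congr 1
          have hexp : u ^ (q-1) * u ^ (q/r - q) = u ^ (q/r - 1) := by
            rw [← Real.rpow_add hu.1]
            congr 1; ring
          calc u ^ (q-1) * g u ^ q * ((-(q/r - q))⁻¹ * u ^ (q/r - q))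
              = (-(q/r - q))⁻¹ * (u ^ (q-1) * u ^ (q/r - q) * g u ^ q) := by ring
            _ = (-(q/r - q))⁻¹ * (u ^ (q/r - 1) * g u ^ q) := by rw [hexp]
  have step5 : (∫⁻ u in Ioo (0:ℝ) 1,
      ENNReal.ofReal ((-(q/r - q))⁻¹) * ENNReal.ofReal (u ^ (q/r - 1) * g u ^ q))
      = ENNReal.ofReal ((-(q/r - q))⁻¹) *
          ∫⁻ u in Ioo (0:ℝ) 1, ENNReal.ofReal (u ^ (q/r - 1) * g u ^ q) :=
    lintegral_const_mul' _ _ ENNReal.ofReal_ne_top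
  have stepB : (∫⁻ u in Ioo (0:ℝ) 1, ENNReal.ofReal (u ^ (q/r - 1) * g u ^ q))
      = ∫⁻ t in Ioo (0:ℝ) 1, ENNReal.ofReal ((t ^ (1/r) * g t) ^ q / t) :=
    (setLIntegral_congr_fun measurableSet_Ioo (fun t ht => by
      rw [aux_phi_eq ht.1 (hg0 t ht) q r])).symm
  have hconst : ENNReal.ofReal (2/q * (1 - 1/r)⁻¹)
      = 2 * ENNReal.ofReal ((-(q/r - q))⁻¹) := by
    have h : -(q/r - q) = q * (1 - 1/r) := by field_simp; ring
    have h2 : 2/q * (1 - 1/r)⁻¹ = 2 * (q * (1 - 1/r))⁻¹ := by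
      rw [mul_inv, div_eq_mul_inv]; ring
    rw [h2, ← h, ENNReal.ofReal_mul zero_le_two, ENNReal.ofReal_ofNat]
  calc (∫⁻ t in Ioo (0:ℝ) 1,
      ENNReal.ofReal ((t ^ (1/r) * ((1/t) * ∫ u in Ioc (0:ℝ) t, g u)) ^ q / t))
      = ∫⁻ t in Ioo (0:ℝ) 1,
          W t * ENNReal.ofReal ((∫ u in Ioc (0:ℝ) t, g u) ^ q) := stepA
    _ ≤ ∫⁻ t in Ioo (0:ℝ) 1, 2 * (W t * ∫⁻ u in Ioc (0:ℝ) t, V u) := step1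
    _ = 2 * ∫⁻ t in Ioo (0:ℝ) 1, W t * ∫⁻ u in Ioc (0:ℝ) t, V u := step2
    _ = 2 * ∫⁻ u in Ioo (0:ℝ) 1, V u * ∫⁻ t in Ico u 1, W t := by rw [stepT]
    _ ≤ 2 * ∫⁻ u in Ioo (0:ℝ) 1,
          ENNReal.ofReal ((-(q/r - q))⁻¹) *
            ENNReal.ofReal (u ^ (q/r - 1) * g u ^ q) :=
        mul_le_mul_right step4 2
    _ = 2 * (ENNReal.ofReal ((-(q/r - q))⁻¹) *
          ∫⁻ u in Ioo (0:ℝ) 1, ENNReal.ofReal (u ^ (q/r - 1) * g u ^ q)) := by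
        rw [step5]
    _ = ENNReal.ofReal (2/q * (1 - 1/r)⁻¹) *
          ∫⁻ u in Ioo (0:ℝ) 1, ENNReal.ofReal (u ^ (q/r - 1) * g u ^ q) := by
        rw [hconst, mul_assoc]
    _ = ENNReal.ofReal (2/q * (1 - 1/r)⁻¹) *
          ∫⁻ t in Ioo (0:ℝ) 1, ENNReal.ofReal ((t ^ (1/r) * g t) ^ q / t) := by
        rw [stepB]

/-- Hardy-type inequality for the maximal function of a decreasing function in the
quasi-Banach range `0 < q < 1`: there is `C > 0` depending only on `q` such that for
every `1 < r < ∞` and every non-negative decreasing `g` on `(0,1)`,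
`∫₀^1 (t^{1/r} g^{**}(t))^q dt/t ≤ C (1-1/r)^{-1} ∫₀^1 (t^{1/r} g(t))^q dt/t`,
where `g^{**}(t) = (1/t)∫₀^t g(u) du`. -/
theorem hardy_maximal_quasiBanach (q : ℝ) (hq0 : 0 < q) (hq1 : q < 1) :
    ∃ C : ℝ, 0 < C ∧ ∀ r : ℝ, 1 < r → ∀ g : ℝ → ℝ,
      AntitoneOn g (Ioo (0:ℝ) 1) → (∀ t ∈ Ioo (0:ℝ) 1, 0 ≤ g t) →
      (∫ t in Ioo (0:ℝ) 1, (t ^ (1/r) * ((1/t) * ∫ u in Ioc (0:ℝ) t, g u)) ^ q / t)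
        ≤ C * (1 - 1/r)⁻¹ * ∫ t in Ioo (0:ℝ) 1, (t ^ (1/r) * g t) ^ q / t := by
  refine ⟨2/q, by positivity, fun r hr g hg hg0 => ?_⟩
  have hr0 : (0:ℝ) < r := lt_trans one_pos hr
  have hrinv : 1/r < 1 := by rw [div_lt_one hr0]; exact hr
  have hCnn : 0 ≤ 2/q * (1 - 1/r)⁻¹ :=
    mul_nonneg (by positivity) (inv_nonneg.2 (by linarith))
  have hφnn : ∀ t ∈ Ioo (0:ℝ) 1, 0 ≤ (t ^ (1/r) * g t) ^ q / t := fun t ht =>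
    div_nonneg (Real.rpow_nonneg
      (mul_nonneg (Real.rpow_nonneg ht.1.le _) (hg0 t ht)) q) ht.1.le
  have hRHSnn : 0 ≤ ∫ t in Ioo (0:ℝ) 1, (t ^ (1/r) * g t) ^ q / t :=
    setIntegral_nonneg measurableSet_Ioo hφnn
  by_cases hgi : IntegrableOn g (Ioo (0:ℝ) 1) volume
  · -- g is integrable
    have hψnn : ∀ t ∈ Ioo (0:ℝ) 1,
        0 ≤ (t ^ (1/r) * ((1/t) * ∫ u in Ioc (0:ℝ) t, g u)) ^ q / t := fun t ht =>
      div_nonneg (Real.rpow_nonneg (mul_nonneg (Real.rpow_nonneg ht.1.le _)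
        (mul_nonneg (div_nonneg zero_le_one ht.1.le)
          (setIntegral_nonneg measurableSet_Ioc fun u hu =>
            hg0 u ⟨hu.1, lt_of_le_of_lt hu.2 ht.2⟩))) q) ht.1.le
    have hψnn_ae : 0 ≤ᵐ[volume.restrict (Ioo (0:ℝ) 1)]
        fun t => (t ^ (1/r) * ((1/t) * ∫ u in Ioc (0:ℝ) t, g u)) ^ q / t :=
      (ae_restrict_iff' measurableSet_Ioo).2 (Filter.Eventually.of_forall hψnn)
    have hφnn_ae : 0 ≤ᵐ[volume.restrict (Ioo (0:ℝ) 1)]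
        fun t => (t ^ (1/r) * g t) ^ q / t :=
      (ae_restrict_iff' measurableSet_Ioo).2 (Filter.Eventually.of_forall hφnn)
    have hgae : AEMeasurable g (volume.restrict (Ioo (0:ℝ) 1)) :=
      aemeasurable_restrict_of_antitoneOn measurableSet_Ioo hg
    have hpsi_ge : ∀ t ∈ Ioo (0:ℝ) 1,
        (t ^ (1/r) * g t) ^ q / t
          ≤ (t ^ (1/r) * ((1/t) * ∫ u in Ioc (0:ℝ) t, g u)) ^ q / t := by
      intro t ht
      have hsub : Ioc (0:ℝ) t ⊆ Ioo (0:ℝ) 1 := fun u hu =>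
        ⟨hu.1, lt_of_le_of_lt hu.2 ht.2⟩
      have hconst : (∫ _u in Ioc (0:ℝ) t, g t) ≤ ∫ u in Ioc (0:ℝ) t, g u :=
        setIntegral_mono_on
          (integrableOn_const (by rw [Real.volume_Ioc]; exact ofReal_ne_top))
          (hgi.mono_set hsub) measurableSet_Ioc
          (fun u hu => hg (hsub hu) ht hu.2)
      have hconst2 : (∫ _u in Ioc (0:ℝ) t, g t) = t * g t := by
        rw [setIntegral_const, Real.volume_real_Ioc_of_le ht.1.le, sub_zero,
          smul_eq_mul]
      have h3 : t * g t ≤ ∫ u in Ioc (0:ℝ) t, g u := hconst2 ▸ hconst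
      have hle : g t ≤ (1/t) * ∫ u in Ioc (0:ℝ) t, g u := by
        rw [one_div]
        calc g t = t⁻¹ * (t * g t) := by rw [← mul_assoc, inv_mul_cancel₀ ht.1.ne', one_mul]
          _ ≤ t⁻¹ * ∫ u in Ioc (0:ℝ) t, g u :=
              mul_le_mul_of_nonneg_left h3 (inv_nonneg.2 ht.1.le)
      refine (div_le_div_iff_of_pos_right ht.1).2 ?_
      exact Real.rpow_le_rpow
        (mul_nonneg (Real.rpow_nonneg ht.1.le _) (hg0 t ht))
        (mul_le_mul_of_nonneg_left hle (Real.rpow_nonneg ht.1.le _)) hq0.le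
    by_cases hφint : IntegrableOn (fun t => (t ^ (1/r) * g t) ^ q / t)
        (Ioo (0:ℝ) 1) volume
    · -- RHS integrand integrable: use the lintegral inequality
      have hmain := aux_main hq0 hq1 hr hg hg0
      rw [← ofReal_integral_eq_lintegral_ofReal hφint hφnn_ae] at hmain
      -- measurability of the LHS integrand
      have hGInt : IntegrableOn g (Icc (0:ℝ) 1) volume := by
        rwa [integrableOn_Icc_iff_integrableOn_Ioo]
      have hGae : AEMeasurable (fun t => ∫ u in Ioc (0:ℝ) t, g u)
          (volume.restrict (Ioo (0:ℝ) 1)) :=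
        ((intervalIntegral.continuousOn_primitive hGInt).aemeasurable
          measurableSet_Icc).mono_measure
          (Measure.restrict_mono Ioo_subset_Icc_self le_rfl)
      have hψae : AEMeasurable
          (fun t => (t ^ (1/r) * ((1/t) * ∫ u in Ioc (0:ℝ) t, g u)) ^ q / t)
          (volume.restrict (Ioo (0:ℝ) 1)) :=
        ((((measurable_id.pow measurable_const).aemeasurable).mul
          (((measurable_const.div measurable_id).aemeasurable).mul hGae)).pow
            aemeasurable_const).div measurable_id.aemeasurable
      have hψlt : (∫⁻ t in Ioo (0:ℝ) 1,
          ENNReal.ofReal ((t ^ (1/r) * ((1/t) * ∫ u in Ioc (0:ℝ) t, g u)) ^ q / t)) < ⊤ :=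
        lt_of_le_of_lt hmain (by
          rw [← ENNReal.ofReal_mul hCnn]
          exact ofReal_lt_top)
      have hψint : IntegrableOn
          (fun t => (t ^ (1/r) * ((1/t) * ∫ u in Ioc (0:ℝ) t, g u)) ^ q / t)
          (Ioo (0:ℝ) 1) volume :=
        ⟨hψae.aestronglyMeasurable, (hasFiniteIntegral_iff_ofReal hψnn_ae).2 hψlt⟩
      have hLHS : (∫ t in Ioo (0:ℝ) 1,
          (t ^ (1/r) * ((1/t) * ∫ u in Ioc (0:ℝ) t, g u)) ^ q / t)
          = (∫⁻ t in Ioo (0:ℝ) 1,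
              ENNReal.ofReal
                ((t ^ (1/r) * ((1/t) * ∫ u in Ioc (0:ℝ) t, g u)) ^ q / t)).toReal :=
        integral_eq_lintegral_of_nonneg_ae hψnn_ae hψae.aestronglyMeasurable
      rw [hLHS]
      have := ENNReal.toReal_mono (by rw [← ENNReal.ofReal_mul hCnn]; exact ofReal_ne_top)
        hmain
      rw [← ENNReal.ofReal_mul hCnn,
        ENNReal.toReal_ofReal (mul_nonneg hCnn hRHSnn)] at this
      linarith [this]
    · -- RHS integrand not integrable: both sides vanish
      rw [integral_undef hφint, mul_zero]
      by_cases hψint : IntegrableOn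
          (fun t => (t ^ (1/r) * ((1/t) * ∫ u in Ioc (0:ℝ) t, g u)) ^ q / t)
          (Ioo (0:ℝ) 1) volume
      · exfalso
        apply hφint
        have hφae : AEMeasurable (fun t => (t ^ (1/r) * g t) ^ q / t)
            (volume.restrict (Ioo (0:ℝ) 1)) :=
          ((((measurable_id.pow measurable_const).aemeasurable).mul hgae).pow
            aemeasurable_const).div measurable_id.aemeasurable
        refine Integrable.mono' hψint hφae.aestronglyMeasurable
          ((ae_restrict_iff' measurableSet_Ioo).2 (Filter.Eventually.of_forall
            fun t ht => ?_))
        rw [Real.norm_eq_abs, abs_of_nonneg (hφnn t ht)]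
        exact hpsi_ge t ht
      · rw [integral_undef hψint]
  · -- g is not integrable near 0
    have hnotint : ∀ t ∈ Ioo (0:ℝ) 1, ¬ IntegrableOn g (Ioc (0:ℝ) t) volume := by
      intro t ht hint
      apply hgi
      have hIcosub : Ico t 1 ⊆ Ioo (0:ℝ) 1 := fun u hu =>
        ⟨lt_of_lt_of_le ht.1 hu.1, hu.2⟩
      have hbd : IntegrableOn g (Ico t 1) volume := by
        refine ⟨(aemeasurable_restrict_of_antitoneOn measurableSet_Ico
          (hg.mono hIcosub)).aestronglyMeasurable, ?_⟩
        refine HasFiniteIntegral.restrict_of_bounded (C := g t)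
          (by rw [Real.volume_Ico]; exact ofReal_lt_top) ?_
        refine (ae_restrict_iff' measurableSet_Ico).2 (Filter.Eventually.of_forall
          fun u hu => ?_)
        rw [Real.norm_eq_abs, abs_of_nonneg (hg0 u (hIcosub hu))]
        exact hg ht (hIcosub hu) hu.1
      exact (hint.union hbd).mono_set fun u hu =>
        (le_or_gt u t).elim (fun h => Or.inl ⟨hu.1, h⟩)
          (fun h => Or.inr ⟨h.le, hu.2⟩)
    have hzero : ∀ t ∈ Ioo (0:ℝ) 1,
        (t ^ (1/r) * ((1/t) * ∫ u in Ioc (0:ℝ) t, g u)) ^ q / t = 0 := by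
      intro t ht
      rw [integral_undef (hnotint t ht), mul_zero, mul_zero,
        Real.zero_rpow hq0.ne', zero_div]
    rw [setIntegral_congr_fun measurableSet_Ioo hzero, integral_zero]
    exact mul_nonneg (mul_nonneg (by positivity)
      (inv_nonneg.2 (by linarith))) hRHSnn
end
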